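/- arXiv:1604.02489 — 2 statements merged into one kernel-verified Lean document; each statement's English description precedes it below -/
import Mathlib

section
/- For any d, s ∈ ℕ and ε > 0 there exists r ∈ ℕ such that for any polynomial mapping φ ∈ Pol⁰_d([r], 𝕋) there exists a disjoint s-subcollection B in [r] such that the subpolynomial φ↓_B admits a q-producing function Φ̂_B : B^d → 𝕋 satisfying dist(Φ̂_B(w), 0) < ε for every w ∈ B^d. -/
open Finset

/-- The `β`-derivative of a map `φ : F(A) → H`: `D_β φ (α) = φ(α ∪ β) - φ(α)`. -/
def fsDeriv {ι H : Type*} [DecidableEq ι] [AddCommGroup H]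
    (φ : Finset ι → H) (β : Finset ι) : Finset ι → H :=
  fun α => φ (α ∪ β) - φ α

/-- Iterated derivative `D_{β 0} ⋯ D_{β (n-1)} φ`. -/
def iterDeriv {ι H : Type*} [DecidableEq ι] [AddCommGroup H] :
    {n : ℕ} → (Finset ι → H) → (Fin n → Finset ι) → (Finset ι → H)
  | 0, φ, _ => φ
  | _ + 1, φ, β => iterDeriv (fsDeriv φ (β 0)) (fun i => β i.succ)

/-- `φ : F(A) → H` is polynomial of degree ≤ d: any d+1 pairwise disjoint
derivatives (by finite subsets of `A`) kill `φ` on `F(A)` away from them. -/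
def IsPolyDeg {ι H : Type*} [DecidableEq ι] [AddCommGroup H]
    (A : Finset ι) (d : ℕ) (φ : Finset ι → H) : Prop :=
  ∀ β : Fin (d + 1) → Finset ι, (∀ i, β i ⊆ A) →
    (∀ i j, i ≠ j → Disjoint (β i) (β j)) →
    ∀ α : Finset ι, α ⊆ A → (∀ i, Disjoint α (β i)) → iterDeriv φ β α = 0

/-- `Pol⁰_d(A,H)`: polynomial maps of degree ≤ d vanishing at `∅`. -/
def Pol0 {ι H : Type*} [DecidableEq ι] [AddCommGroup H]
    (A : Finset ι) (d : ℕ) (φ : Finset ι → H) : Prop :=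
  IsPolyDeg A d φ ∧ φ (∅ : Finset ι) = 0

/-- `‖x‖`: the distance from a real number `x` to `ℤ`. -/
noncomputable def distToInt (x : ℝ) : ℝ := |x - round x|



variable {ι : Type*} [DecidableEq ι] {H : Type*} [AddCommGroup H]

/-- Sum over supersets of `U` inside `C`, reindexed by the complement part. -/
lemma sum_filter_superset_powerset {C U : Finset ι} (hU : U ⊆ C) (F : Finset ι → H) :
    ∑ S ∈ C.powerset.filter (fun S => U ⊆ S), F S = ∑ V ∈ (C \ U).powerset, F (U ∪ V) := by
  refine Finset.sum_nbij' (fun S => S \ U) (fun V => U ∪ V) ?_ ?_ ?_ ?_ ?_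
  · intro S hS
    simp only [mem_filter, mem_powerset] at hS ⊢
    exact sdiff_subset_sdiff hS.1 le_rfl
  · intro V hV
    simp only [mem_powerset] at hV
    simp only [mem_filter, mem_powerset]
    constructor
    · exact union_subset hU (hV.trans sdiff_subset)
    · exact subset_union_left
  · intro S hS
    simp only [mem_filter, mem_powerset] at hS
    exact union_sdiff_of_subset hS.2
  · intro V hV
    simp only [mem_powerset] at hV
    exact union_sdiff_cancel_left (disjoint_of_subset_right hV sdiff_disjoint.symm)
  · intro S hS; simp only [mem_filter, mem_powerset] at hS
    rw [union_sdiff_of_subset hS.2]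

lemma sum_superset_sign {C U : Finset ι} (hU : U ⊆ C) (z : ℤ) :
    ∑ S ∈ C.powerset, (if U ⊆ S then (-1 : ℤ)^S.card * z else 0)
      = if U = C then (-1 : ℤ)^C.card * z else 0 := by
  rw [← sum_filter, sum_filter_superset_powerset hU]
  have : ∀ V ∈ (C \ U).powerset, (-1 : ℤ)^(U ∪ V).card * z
      = (-1 : ℤ)^U.card * z * (-1 : ℤ)^V.card := by
    intro V hV
    simp only [mem_powerset] at hV
    rw [card_union_of_disjoint (disjoint_of_subset_right hV sdiff_disjoint.symm), pow_add]
    ring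
  rw [Finset.sum_congr rfl this, ← Finset.mul_sum, Finset.sum_powerset_neg_one_pow_card]
  have hiff : C \ U = ∅ ↔ U = C := by
    constructor
    · intro h; exact hU.antisymm (fun x hx => by
        by_contra hxU
        exact absurd (mem_sdiff.2 ⟨hx, hxU⟩) (by simp [h]))
    · intro h; subst h; simp
  by_cases h : U = C
  · subst h; simp [hiff]
  · rw [if_neg (by rw [hiff]; exact h), if_neg h, mul_zero]

/-- Extend a sum over `S.powerset` to `C.powerset` with an `if`. -/
lemma sum_powerset_extend {C S : Finset ι} (hS : S ⊆ C) (f : Finset ι → H) :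
    ∑ U ∈ S.powerset, f U = ∑ U ∈ C.powerset, if U ⊆ S then f U else 0 := by
  rw [← sum_filter]
  congr 1
  ext U
  simp only [mem_powerset, mem_filter]
  exact ⟨fun h => ⟨h.trans hS, h⟩, fun h => h.2⟩

/-- Sum over the powerset of a disjoint union. -/
lemma sum_powerset_union_disjoint {u v : Finset ι} (h : Disjoint u v) (F : Finset ι → H) :
    ∑ w ∈ (u ∪ v).powerset, F w = ∑ x ∈ u.powerset, ∑ y ∈ v.powerset, F (x ∪ y) := by
  rw [← Finset.sum_product']
  refine Finset.sum_nbij' (fun w => (w ∩ u, w ∩ v)) (fun p => p.1 ∪ p.2) ?_ ?_ ?_ ?_ ?_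
  · intro w hw; simp only [mem_powerset] at hw
    simp only [mem_product, mem_powerset]
    exact ⟨inter_subset_right, inter_subset_right⟩
  · intro p hp; simp only [mem_product, mem_powerset] at hp
    simp only [mem_powerset]
    exact union_subset (hp.1.trans subset_union_left) (hp.2.trans subset_union_right)
  · intro w hw; simp only [mem_powerset] at hw
    show (w ∩ u) ∪ (w ∩ v) = w
    ext x
    have := @hw x
    simp only [mem_union, mem_inter, mem_union] at this ⊢
    tauto
  · intro p hp; simp only [mem_product, mem_powerset] at hp
    have hd := Finset.disjoint_left.1 h
    show ((p.1 ∪ p.2) ∩ u, (p.1 ∪ p.2) ∩ v) = p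
    have e1 : (p.1 ∪ p.2) ∩ u = p.1 := by
      ext x
      have h1 := @hp.1 x
      have h2 := @hp.2 x
      simp only [mem_inter, mem_union] at *
      constructor
      · rintro ⟨hx | hx, hxu⟩
        · exact hx
        · exact (hd hxu (h2 hx)).elim
      · intro hx; exact ⟨Or.inl hx, h1 hx⟩
    have e2 : (p.1 ∪ p.2) ∩ v = p.2 := by
      ext x
      have h1 := @hp.1 x
      have h2 := @hp.2 x
      simp only [mem_inter, mem_union] at *
      constructor
      · rintro ⟨hx | hx, hxv⟩
        · exact (hd (h1 hx) hxv).elim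
        · exact hx
      · intro hx; exact ⟨Or.inr hx, h2 hx⟩
    rw [e1, e2]
  · intro w hw; simp only [mem_powerset] at hw
    show F w = F ((w ∩ u) ∪ (w ∩ v))
    congr 1
    ext x
    have := @hw x
    simp only [mem_union, mem_inter] at this ⊢
    tauto


variable {ι : Type*} [DecidableEq ι] {H : Type*} [AddCommGroup H]

/-- Iterated derivative over distinct single points of `T`, based at `α`. -/
def Dsing (φ : Finset ι → H) (α T : Finset ι) : H :=
  ∑ U ∈ T.powerset, ((-1 : ℤ)^(T.card + U.card)) • φ (α ∪ U)

/-- Iterated derivative over blocks `B j`, `j ∈ J`, based at `α`. -/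
def Dblk {κ : Type*} [DecidableEq κ] (φ : Finset ι → H) (α : Finset ι)
    (J : Finset κ) (B : κ → Finset ι) : H :=
  ∑ T ∈ J.powerset, ((-1 : ℤ)^(J.card + T.card)) • φ (α ∪ T.biUnion B)

/-- Möbius inversion: `φ(α ∪ C)` is the sum of all its point-derivatives based at `α`. -/
lemma sum_Dsing_powerset (φ : Finset ι → H) (α C : Finset ι) :
    ∑ S ∈ C.powerset, Dsing φ α S = φ (α ∪ C) := by
  unfold Dsing
  have step1 : ∀ S ∈ C.powerset,
      ∑ U ∈ S.powerset, ((-1 : ℤ)^(S.card + U.card)) • φ (α ∪ U)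
        = ∑ U ∈ C.powerset, if U ⊆ S then ((-1 : ℤ)^(S.card + U.card)) • φ (α ∪ U) else 0 := by
    intro S hS
    exact sum_powerset_extend (mem_powerset.1 hS) _
  rw [Finset.sum_congr rfl step1, Finset.sum_comm]
  have step2 : ∀ U ∈ C.powerset,
      ∑ S ∈ C.powerset, (if U ⊆ S then ((-1 : ℤ)^(S.card + U.card)) • φ (α ∪ U) else 0)
        = (if U = C then ((-1 : ℤ)^(C.card + U.card)) else 0) • φ (α ∪ U) := by
    intro U hU
    have : ∀ S ∈ C.powerset, (if U ⊆ S then ((-1 : ℤ)^(S.card + U.card)) • φ (α ∪ U) else 0)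
        = (if U ⊆ S then ((-1 : ℤ)^S.card * (-1 : ℤ)^U.card) else 0) • φ (α ∪ U) := by
      intro S hS
      by_cases h : U ⊆ S
      · simp only [h, if_true, pow_add]
      · simp only [h, if_false, zero_smul]
    rw [Finset.sum_congr rfl this, ← Finset.sum_smul, sum_superset_sign (mem_powerset.1 hU)]
    by_cases h : U = C
    · simp only [h, if_true, pow_add]
    · simp only [h, if_false]
  rw [Finset.sum_congr rfl step2]
  rw [Finset.sum_eq_single C]
  · simp
  · intro U _ hne; simp [hne]
  · intro h; exact absurd (mem_powerset.2 le_rfl) h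

/-- Key Möbius computation at block level, for an arbitrary "coefficient system" g. -/
lemma Dblk_sum_powerset {κ : Type*} [DecidableEq κ] (g : Finset ι → H)
    (J : Finset κ) (B : κ → Finset ι)
    (hdisj : ∀ j ∈ J, ∀ j' ∈ J, j ≠ j' → Disjoint (B j) (B j')) :
    ∑ T ∈ J.powerset, ((-1 : ℤ)^(J.card + T.card)) •
        (∑ S ∈ (T.biUnion B).powerset, g S)
      = ∑ S ∈ (J.biUnion B).powerset.filter (fun S => ∀ j ∈ J, ¬ Disjoint S (B j)), g S := by
  have key : ∀ T ∈ J.powerset, ∀ S ∈ (J.biUnion B).powerset,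
      (S ⊆ T.biUnion B ↔ J.filter (fun j => ¬ Disjoint S (B j)) ⊆ T) := by
    intro T hT S hS
    rw [mem_powerset] at hT hS
    constructor
    · intro h j hj
      rw [mem_filter] at hj
      obtain ⟨hjJ, hnd⟩ := hj
      rw [Finset.not_disjoint_iff] at hnd
      obtain ⟨x, hxS, hxB⟩ := hnd
      have := h hxS
      rw [mem_biUnion] at this
      obtain ⟨j', hj', hxB'⟩ := this
      by_cases hjj : j = j'
      · subst hjj; exact hj'
      · exact ((Finset.disjoint_left.1 (hdisj j hjJ j' (hT hj') hjj)) hxB hxB').elim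
    · intro h x hxS
      have := hS hxS
      rw [mem_biUnion] at this ⊢
      obtain ⟨j, hj, hxB⟩ := this
      refine ⟨j, h ?_, hxB⟩
      rw [mem_filter]
      exact ⟨hj, Finset.not_disjoint_iff.2 ⟨x, hxS, hxB⟩⟩
  have step1 : ∀ T ∈ J.powerset,
      ((-1 : ℤ)^(J.card + T.card)) • (∑ S ∈ (T.biUnion B).powerset, g S)
        = ∑ S ∈ (J.biUnion B).powerset,
            if J.filter (fun j => ¬ Disjoint S (B j)) ⊆ T
            then ((-1 : ℤ)^(J.card + T.card)) • g S else 0 := by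
    intro T hT
    rw [Finset.smul_sum]
    rw [sum_powerset_extend (biUnion_subset_biUnion_of_subset_left B (mem_powerset.1 hT))
      (fun S => ((-1 : ℤ)^(J.card + T.card)) • g S)]
    refine Finset.sum_congr rfl fun S hS => ?_
    by_cases h : S ⊆ T.biUnion B
    · rw [if_pos h, if_pos ((key T hT S hS).1 h)]
    · rw [if_neg h, if_neg (fun hc => h ((key T hT S hS).2 hc))]
  rw [Finset.sum_congr rfl step1, Finset.sum_comm]
  rw [sum_filter]
  refine Finset.sum_congr rfl fun S hS => ?_
  set U := J.filter (fun j => ¬ Disjoint S (B j)) with hU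
  have hUJ : U ⊆ J := filter_subset _ _
  have : ∀ T ∈ J.powerset, (if U ⊆ T then ((-1 : ℤ)^(J.card + T.card)) • g S else 0)
      = (if U ⊆ T then ((-1 : ℤ)^T.card * (-1 : ℤ)^J.card) else 0) • g S := by
    intro T hT
    by_cases h : U ⊆ T
    · simp only [h, if_true, pow_add]; rw [mul_comm]
    · simp only [h, if_false, zero_smul]
  rw [Finset.sum_congr rfl this, ← Finset.sum_smul, sum_superset_sign hUJ]
  by_cases h : U = J
  · rw [if_pos h, if_pos (fun j hj => (mem_filter.1 (show j ∈ U from h ▸ hj)).2)]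
    rw [← pow_add, ← two_mul, pow_mul]
    norm_num
  · rw [if_neg h, if_neg, zero_smul]
    intro hc
    exact h (hUJ.antisymm (fun j hj => mem_filter.2 ⟨hj, hc j hj⟩))


variable {ι : Type*} [DecidableEq ι] {H : Type*} [AddCommGroup H]

/-- `φ` has degree `≤ d` on `A` in the sense of vanishing `(d+1)`-point derivatives. -/
def DegLE (A : Finset ι) (d : ℕ) (φ : Finset ι → H) : Prop :=
  ∀ T α : Finset ι, T ⊆ A → α ⊆ A → Disjoint α T → T.card = d + 1 → Dsing φ α T = 0

/-- Splitting a point-derivative over a disjoint union. -/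
lemma Dsing_sdiff_split (φ : Finset ι → H) (α K T₀ : Finset ι) (hd : Disjoint K T₀) :
    Dsing φ α (K ∪ T₀)
      = ∑ V ∈ K.powerset, ((-1 : ℤ)^(K.card + V.card)) • Dsing φ (α ∪ V) T₀ := by
  unfold Dsing
  rw [sum_powerset_union_disjoint hd]
  refine Finset.sum_congr rfl fun V hV => ?_
  rw [Finset.smul_sum]
  refine Finset.sum_congr rfl fun U hU => ?_
  rw [smul_smul, ← pow_add, union_assoc]
  congr 2
  rw [card_union_of_disjoint hd,
    card_union_of_disjoint (disjoint_of_subset_left (mem_powerset.1 hV)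
      (disjoint_of_subset_right (mem_powerset.1 hU) hd))]
  ring

/-- Vanishing of all higher-order point derivatives. -/
lemma Dsing_eq_zero_of_degLE {A : Finset ι} {d : ℕ} {φ : Finset ι → H}
    (hφ : DegLE A d φ) {T α : Finset ι} (hT : T ⊆ A) (hα : α ⊆ A)
    (hdisj : Disjoint α T) (hcard : d + 1 ≤ T.card) : Dsing φ α T = 0 := by
  obtain ⟨T₀, hT₀sub, hT₀card⟩ := Finset.exists_subset_card_eq hcard
  have hKT : Disjoint (T \ T₀) T₀ := sdiff_disjoint
  have hsplit : T = (T \ T₀) ∪ T₀ := by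
    rw [sdiff_union_of_subset hT₀sub]
  rw [hsplit, Dsing_sdiff_split φ α _ _ hKT]
  refine Finset.sum_eq_zero fun V hV => ?_
  rw [mem_powerset] at hV
  have hV' : V ⊆ A := (hV.trans sdiff_subset).trans hT
  have : Dsing φ (α ∪ V) T₀ = 0 := by
    refine hφ T₀ (α ∪ V) (hT₀sub.trans hT) (union_subset hα hV') ?_ hT₀card
    refine Finset.disjoint_union_left.2 ⟨disjoint_of_subset_right hT₀sub hdisj, ?_⟩
    exact disjoint_of_subset_left hV hKT
  rw [this, smul_zero]

/-- Derivative of a "sum over powerset" function. -/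
lemma Dsing_sumfun (g : Finset ι → H) (α T : Finset ι) (hdisj : Disjoint α T) :
    Dsing (fun γ => ∑ S ∈ γ.powerset, g S) α T = ∑ V ∈ α.powerset, g (V ∪ T) := by
  unfold Dsing
  have step0 : ∀ U ∈ T.powerset,
      ((-1 : ℤ)^(T.card + U.card)) • (∑ S ∈ (α ∪ U).powerset, g S)
      = ∑ V ∈ α.powerset, ∑ W ∈ U.powerset, ((-1 : ℤ)^(T.card + U.card)) • g (V ∪ W) := by
    intro U hU
    rw [sum_powerset_union_disjoint (disjoint_of_subset_right (mem_powerset.1 hU) hdisj),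
      Finset.smul_sum]
    exact Finset.sum_congr rfl fun V _ => Finset.smul_sum
  rw [Finset.sum_congr rfl step0, Finset.sum_comm]
  refine Finset.sum_congr rfl fun V _ => ?_
  -- now: ∑ U ∈ T.powerset, ∑ W ∈ U.powerset, sign • g (V ∪ W) = g (V ∪ T)
  have step1 : ∀ U ∈ T.powerset,
      ∑ W ∈ U.powerset, ((-1 : ℤ)^(T.card + U.card)) • g (V ∪ W)
      = ∑ W ∈ T.powerset, if W ⊆ U then ((-1 : ℤ)^(T.card + U.card)) • g (V ∪ W) else 0 := by
    intro U hU
    exact sum_powerset_extend (mem_powerset.1 hU) _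
  rw [Finset.sum_congr rfl step1, Finset.sum_comm]
  have step2 : ∀ W ∈ T.powerset,
      ∑ U ∈ T.powerset, (if W ⊆ U then ((-1 : ℤ)^(T.card + U.card)) • g (V ∪ W) else 0)
      = (if W = T then ((-1 : ℤ)^(T.card + W.card)) else 0) • g (V ∪ W) := by
    intro W hW
    have : ∀ U ∈ T.powerset, (if W ⊆ U then ((-1 : ℤ)^(T.card + U.card)) • g (V ∪ W) else 0)
        = (if W ⊆ U then ((-1 : ℤ)^U.card * (-1 : ℤ)^T.card) else 0) • g (V ∪ W) := by
      intro U _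
      by_cases h : W ⊆ U
      · simp only [h, if_true, pow_add]; rw [mul_comm]
      · simp only [h, if_false, zero_smul]
    rw [Finset.sum_congr rfl this, ← Finset.sum_smul, sum_superset_sign (mem_powerset.1 hW)]
    by_cases h : W = T
    · subst h; simp only [if_true, pow_add]
    · simp only [h, if_false]
  rw [Finset.sum_congr rfl step2, Finset.sum_eq_single T]
  · rw [if_pos rfl, ← two_mul, pow_mul]; norm_num
  · intro U _ hne; simp [hne]
  · intro h; exact absurd (mem_powerset.2 le_rfl) h

/-- Base-change: the derivative at base `α` expands over subsets of `α` at base `∅`. -/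
lemma Dsing_base_expand (φ : Finset ι → H) (α T : Finset ι) (hdisj : Disjoint α T) :
    Dsing φ α T = ∑ V ∈ α.powerset, Dsing φ ∅ (V ∪ T) := by
  have hφ : φ = fun γ => ∑ S ∈ γ.powerset, Dsing φ ∅ S := by
    funext γ
    rw [sum_Dsing_powerset φ ∅ γ, empty_union]
  conv_lhs => rw [hφ]
  rw [Dsing_sumfun _ _ _ hdisj]

/-- Under `DegLE d`, order-`d` derivatives do not depend on the base point. -/
lemma Dsing_base_indep {A : Finset ι} {d : ℕ} {φ : Finset ι → H}
    (hφ : DegLE A d φ) {T α : Finset ι} (hT : T ⊆ A) (hα : α ⊆ A)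
    (hdisj : Disjoint α T) (hcard : T.card = d) :
    Dsing φ α T = Dsing φ ∅ T := by
  rw [Dsing_base_expand φ α T hdisj]
  rw [Finset.sum_eq_single ∅]
  · rw [empty_union]
  · intro V hV hne
    refine Dsing_eq_zero_of_degLE hφ (union_subset ((mem_powerset.1 hV).trans hα) hT)
      (empty_subset _) (disjoint_empty_left _) ?_
    rw [card_union_of_disjoint (disjoint_of_subset_left (mem_powerset.1 hV) hdisj), hcard]
    have : 1 ≤ V.card := Finset.card_pos.2 (nonempty_iff_ne_empty.2 hne)
    omega
  · intro h; exact absurd (mem_powerset.2 (empty_subset _)) h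

/-- A set meeting each of `J`-many pairwise disjoint sets has at least `|J|` elements. -/
lemma card_le_of_hits {κ : Type*} [DecidableEq κ] {J : Finset κ} {B : κ → Finset ι}
    {S : Finset ι} (hdisj : ∀ j ∈ J, ∀ j' ∈ J, j ≠ j' → Disjoint (B j) (B j'))
    (hhits : ∀ j ∈ J, ¬ Disjoint S (B j)) : J.card ≤ S.card := by
  have choice : ∀ j ∈ J, ∃ x, x ∈ S ∧ x ∈ B j := by
    intro j hj
    obtain ⟨x, hx1, hx2⟩ := Finset.not_disjoint_iff.1 (hhits j hj)
    exact ⟨x, hx1, hx2⟩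
  choose f hf1 hf2 using choice
  classical
  have : ∀ p : { j // j ∈ J }, f p.1 p.2 ∈ S := fun p => hf1 p.1 p.2
  have hinj : Function.Injective (fun p : { j // j ∈ J } => f p.1 p.2) := by
    intro p q hpq
    by_contra hne
    have hne' : p.1 ≠ q.1 := fun h => hne (Subtype.ext h)
    have heq : f p.1 p.2 = f q.1 q.2 := hpq
    exact Finset.disjoint_left.1 (hdisj p.1 p.2 q.1 q.2 hne') (hf2 p.1 p.2)
      (heq ▸ hf2 q.1 q.2)
  calc J.card = Fintype.card { j // j ∈ J } := (Fintype.card_coe J).symm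
    _ ≤ S.card := by
        rw [← Fintype.card_coe S]
        refine Fintype.card_le_of_injective
          (fun p => ⟨f p.1 p.2, hf1 p.1 p.2⟩) ?_
        intro p q h
        exact hinj (show f p.1 p.2 = f q.1 q.2 from congrArg Subtype.val h)


variable {ι : Type*} [DecidableEq ι] {H : Type*} [AddCommGroup H]
variable {κ : Type*} [DecidableEq κ]

/-- Block derivatives expand as sums of point derivatives over "transversal-ish" sets. -/
lemma Dblk_eq_sum_Dsing (φ : Finset ι → H) (α : Finset ι) (J : Finset κ) (B : κ → Finset ι)
    (hdisj : ∀ j ∈ J, ∀ j' ∈ J, j ≠ j' → Disjoint (B j) (B j')) :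
    Dblk φ α J B
      = ∑ S ∈ (J.biUnion B).powerset.filter (fun S => ∀ j ∈ J, ¬ Disjoint S (B j)),
          Dsing φ α S := by
  unfold Dblk
  rw [← Dblk_sum_powerset (Dsing φ α) J B hdisj]
  refine Finset.sum_congr rfl fun T _ => ?_
  rw [sum_Dsing_powerset]

/-- High-order block derivatives vanish. -/
lemma Dblk_eq_zero_of_degLE {A : Finset ι} {d : ℕ} {φ : Finset ι → H}
    (hφ : DegLE A d φ) (α : Finset ι) (J : Finset κ) (B : κ → Finset ι)
    (hdisj : ∀ j ∈ J, ∀ j' ∈ J, j ≠ j' → Disjoint (B j) (B j'))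
    (hsub : ∀ j ∈ J, B j ⊆ A) (hα : α ⊆ A) (hαB : ∀ j ∈ J, Disjoint α (B j))
    (hcard : d + 1 ≤ J.card) : Dblk φ α J B = 0 := by
  rw [Dblk_eq_sum_Dsing φ α J B hdisj]
  refine Finset.sum_eq_zero fun S hS => ?_
  rw [mem_filter, mem_powerset] at hS
  obtain ⟨hSsub, hShits⟩ := hS
  have hSA : S ⊆ A := hSsub.trans (biUnion_subset.2 hsub)
  have hαS : Disjoint α S := by
    refine disjoint_of_subset_right hSsub ?_
    rw [Finset.disjoint_biUnion_right]
    exact hαB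
  exact Dsing_eq_zero_of_degLE hφ hSA hα hαS (hcard.trans (card_le_of_hits hdisj hShits))

lemma biUnion_union' (a b : Finset κ) (B : κ → Finset ι) :
    (a ∪ b).biUnion B = a.biUnion B ∪ b.biUnion B := by
  ext x
  simp only [mem_biUnion, mem_union]
  constructor
  · rintro ⟨j, hj | hj, hx⟩
    · exact Or.inl ⟨j, hj, hx⟩
    · exact Or.inr ⟨j, hj, hx⟩
  · rintro (⟨j, hj, hx⟩ | ⟨j, hj, hx⟩)
    · exact ⟨j, Or.inl hj, hx⟩
    · exact ⟨j, Or.inr hj, hx⟩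

/-- Point derivatives of the block-collapsed map are block derivatives. -/
lemma Dsing_blowup (φ : Finset ι → H) (B : κ → Finset ι) (α' T' : Finset κ) :
    Dsing (fun γ => φ (γ.biUnion B)) α' T' = Dblk φ (α'.biUnion B) T' B := by
  unfold Dsing Dblk
  refine Finset.sum_congr rfl fun U hU => ?_
  show _ • φ ((α' ∪ U).biUnion B) = _
  rw [biUnion_union']

/-- The block-collapsed map of a `DegLE d` map is `DegLE d`. -/
lemma degLE_blowup {A : Finset ι} {d : ℕ} {φ : Finset ι → H} (hφ : DegLE A d φ)
    (Aκ : Finset κ) (B : κ → Finset ι)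
    (hdisj : ∀ j ∈ Aκ, ∀ j' ∈ Aκ, j ≠ j' → Disjoint (B j) (B j'))
    (hsub : ∀ j ∈ Aκ, B j ⊆ A) :
    DegLE Aκ d (fun γ => φ (γ.biUnion B)) := by
  intro T' α' hT' hα' hd hcard
  rw [Dsing_blowup]
  refine Dblk_eq_zero_of_degLE hφ _ _ _ ?_ ?_ ?_ ?_ (le_of_eq hcard.symm)
  · intro j hj j' hj' hne; exact hdisj j (hT' hj) j' (hT' hj') hne
  · intro j hj; exact hsub j (hT' hj)
  · exact biUnion_subset.2 fun j hj => hsub j (hα' hj)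
  · intro j hj
    rw [Finset.disjoint_biUnion_left]
    intro j' hj'
    refine hdisj j' (hα' hj') j (hT' hj) ?_
    intro heq
    exact Finset.disjoint_left.1 hd (heq ▸ hj') hj
/-- Composition of block structures. -/
lemma Dblk_blowup {κ' : Type*} [DecidableEq κ'] (φ : Finset ι → H) (B : κ → Finset ι)
    (J : Finset κ') (D : κ' → Finset κ) :
    Dblk (fun γ => φ (γ.biUnion B)) ∅ J D = Dblk φ ∅ J (fun j => (D j).biUnion B) := by
  unfold Dblk
  refine Finset.sum_congr rfl fun T _ => ?_
  simp only [empty_union]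
  rw [biUnion_biUnion]

/-- `Dblk` is additive in `φ`. -/
lemma Dblk_sub (φ ψ : Finset ι → H) (α : Finset ι) (J : Finset κ) (B : κ → Finset ι) :
    Dblk (fun γ => φ γ - ψ γ) α J B = Dblk φ α J B - Dblk ψ α J B := by
  unfold Dblk
  rw [← Finset.sum_sub_distrib]
  refine Finset.sum_congr rfl fun T _ => ?_
  rw [← smul_sub]

/-- Finite hypergraph Ramsey: a sufficiently large set admits, for every `k`-colouring
of its `d`-element subsets, a monochromatic subset of size `n`. -/
theorem ramseyFin (d : ℕ) : ∀ (k n : ℕ), 0 < k → ∃ N : ℕ, ∀ χ : Finset ℕ → Fin k,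
    ∀ V : Finset ℕ, N ≤ V.card → ∃ W, W ⊆ V ∧ W.card = n ∧
      ∃ c, ∀ T, T ⊆ W → T.card = d → χ T = c := by
  induction d with
  | zero =>
    intro k n hk
    refine ⟨n, fun χ V hV => ?_⟩
    obtain ⟨W, hWV, hWcard⟩ := Finset.exists_subset_card_eq hV
    refine ⟨W, hWV, hWcard, χ ∅, fun T _ hT => ?_⟩
    rw [Finset.card_eq_zero.1 hT]
  | succ d IH =>
    intro k n hk
    have aux : ∀ m : ℕ, ∃ N : ℕ, ∀ χ : Finset ℕ → Fin k, ∀ V : Finset ℕ, N ≤ V.card →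
        ∃ (W : Finset ℕ) (f : ℕ → Fin k), W ⊆ V ∧ W.card = m ∧
          ∀ x T, x ∈ W → T ⊆ W → (∀ y ∈ T, x < y) → T.card = d → χ (insert x T) = f x := by
      intro m
      induction m with
      | zero =>
        exact ⟨0, fun χ V _ => ⟨∅, fun _ => ⟨0, hk⟩, empty_subset _, card_empty,
          fun x T hx _ _ _ => absurd hx (notMem_empty x)⟩⟩
      | succ m IHm =>
        obtain ⟨Nm, hNm⟩ := IHm
        obtain ⟨Nd, hNd⟩ := IH k Nm hk
        refine ⟨Nd + 1, fun χ V hV => ?_⟩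
        have hVne : V.Nonempty := Finset.card_pos.1 (by omega)
        set x := V.min' hVne with hxdef
        have hxV : x ∈ V := V.min'_mem hVne
        have hV' : Nd ≤ (V.erase x).card := by
          rw [Finset.card_erase_of_mem hxV]; omega
        obtain ⟨W₁, hW₁sub, hW₁card, c, hc⟩ := hNd (fun T => χ (insert x T)) (V.erase x) hV'
        obtain ⟨W', f', hW'sub, hW'card, hprop⟩ := hNm χ W₁ (le_of_eq hW₁card.symm)
        have hxW' : x ∉ W' := fun h => (Finset.notMem_erase x V) (hW₁sub (hW'sub h))
        refine ⟨insert x W', fun y => if y = x then c else f' y, ?_, ?_, ?_⟩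
        · exact Finset.insert_subset hxV ((hW'sub.trans hW₁sub).trans (erase_subset _ _))
        · rw [Finset.card_insert_of_notMem hxW', hW'card]
        · intro z T hz hT hlt hcard
          by_cases hzx : z = x
          · subst hzx
            have hxT : x ∉ T := fun h => lt_irrefl x (hlt x h)
            have hTW' : T ⊆ W' := fun y hy =>
              (Finset.mem_insert.1 (hT hy)).resolve_left (fun h => hxT (h ▸ hy))
            show χ (insert x T) = if x = x then c else f' x
            rw [if_pos rfl]
            exact hc T (hTW'.trans hW'sub) hcard
          · have hzW' : z ∈ W' := (Finset.mem_insert.1 hz).resolve_left hzx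
            have hzV : z ∈ V := (erase_subset _ _) (hW₁sub (hW'sub hzW'))
            have hxz : x ≤ z := V.min'_le z hzV
            have hxT : x ∉ T := fun h => absurd (hlt x h) (not_lt.2 hxz)
            have hTW' : T ⊆ W' := fun y hy =>
              (Finset.mem_insert.1 (hT hy)).resolve_left (fun h => hxT (h ▸ hy))
            show χ (insert z T) = if z = x then c else f' z
            rw [if_neg hzx]
            exact hprop z T hzW' hTW' hlt hcard
    obtain ⟨Na, hNa⟩ := aux (k * (n - 1) + 1)
    refine ⟨Na, fun χ V hV => ?_⟩
    obtain ⟨W, f, hWV, hWcard, hprop⟩ := hNa χ V hV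
    have hmaps : ∀ a ∈ W, f a ∈ (Finset.univ : Finset (Fin k)) := fun a _ => mem_univ _
    have hlt : (Finset.univ : Finset (Fin k)).card * (n - 1) < W.card := by
      rw [Finset.card_univ, Fintype.card_fin, hWcard]; omega
    obtain ⟨c, _, hc⟩ := Finset.exists_lt_card_fiber_of_mul_lt_card_of_maps_to hmaps hlt
    have hn : n ≤ (W.filter (fun a => f a = c)).card := by omega
    obtain ⟨W'', hsub'', hcard''⟩ := Finset.exists_subset_card_eq hn
    refine ⟨W'', (hsub''.trans (filter_subset _ _)).trans hWV, hcard'', c, ?_⟩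
    intro T hT hTcard
    have hTne : T.Nonempty := Finset.card_pos.1 (by omega)
    set x := T.min' hTne with hxdef
    have hxT : x ∈ T := T.min'_mem hTne
    have hfx : f x = c := (Finset.mem_filter.1 (hsub'' (hT hxT))).2
    have hxW : x ∈ W := Finset.filter_subset _ _ (hsub'' (hT hxT))
    have hTW : T ⊆ W := hT.trans (hsub''.trans (filter_subset _ _))
    have key := hprop x (T.erase x) hxW ((erase_subset _ _).trans hTW)
      (fun y hy => Finset.min'_lt_of_mem_erase_min' T hTne (by rwa [← hxdef]))
      (by rw [Finset.card_erase_of_mem hxT, hTcard]; omega)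
    rw [Finset.insert_erase hxT] at key
    rw [key, hfx]

lemma coe_sub_int_unitAddCircle (y : ℝ) (n : ℤ) :
    ((y - n : ℝ) : UnitAddCircle) = (y : UnitAddCircle) := by
  have h0 : ((n : ℝ) : UnitAddCircle) = 0 := by simp [AddCircle.coe_eq_zero_iff]
  have : ((y - n : ℝ) : UnitAddCircle)
      = (y : UnitAddCircle) - ((n : ℝ) : UnitAddCircle) :=
    map_sub (QuotientAddGroup.mk' _) y (n : ℝ)
  rw [this, h0, sub_zero]

lemma exists_norm_lift (z : UnitAddCircle) :
    ∃ x : ℝ, (x : UnitAddCircle) = z ∧ |x| = ‖z‖ := by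
  obtain ⟨y, rfl⟩ := QuotientAddGroup.mk_surjective z
  refine ⟨y - round y, coe_sub_int_unitAddCircle y (round y), ?_⟩
  rw [UnitAddCircle.norm_eq]

lemma norm_coe_le_abs (x : ℝ) : ‖(x : UnitAddCircle)‖ ≤ |x| := by
  rw [UnitAddCircle.norm_eq]
  simpa using round_le x 0

/-- A colouring of the circle into `k+1` arcs. -/
noncomputable def torusColor (k : ℕ) (z : UnitAddCircle) : Fin (k + 1) :=
  ⟨⌊((k : ℝ) + 1) * Int.fract ((exists_norm_lift z).choose)⌋₊ % (k + 1),
    Nat.mod_lt _ (by omega)⟩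

lemma torusColor_dist {k : ℕ} {z w : UnitAddCircle} (h : torusColor k z = torusColor k w) :
    ‖z - w‖ < 1 / ((k : ℝ) + 1) := by
  set K : ℝ := (k : ℝ) + 1 with hK
  have hKpos : (0 : ℝ) < K := by positivity
  set a := Int.fract ((exists_norm_lift z).choose) with ha
  set b := Int.fract ((exists_norm_lift w).choose) with hb
  have ha0 : 0 ≤ a := Int.fract_nonneg _
  have ha1 : a < 1 := Int.fract_lt_one _
  have hb0 : 0 ≤ b := Int.fract_nonneg _
  have hb1 : b < 1 := Int.fract_lt_one _
  have haz : ((a : ℝ) : UnitAddCircle) = z := by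
    rw [ha, Int.fract, coe_sub_int_unitAddCircle]
    exact (exists_norm_lift z).choose_spec.1
  have hbw : ((b : ℝ) : UnitAddCircle) = w := by
    rw [hb, Int.fract, coe_sub_int_unitAddCircle]
    exact (exists_norm_lift w).choose_spec.1
  have hKnat : K = ((k + 1 : ℕ) : ℝ) := by push_cast; ring
  have hfa : ⌊K * a⌋₊ < k + 1 := by
    rw [Nat.floor_lt (by positivity)]
    push_cast
    nlinarith
  have hfb : ⌊K * b⌋₊ < k + 1 := by
    rw [Nat.floor_lt (by positivity)]
    push_cast
    nlinarith
  have heq : ⌊K * a⌋₊ = ⌊K * b⌋₊ := by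
    have h' : ⌊K * a⌋₊ % (k+1) = ⌊K * b⌋₊ % (k+1) := by
      have := congrArg Fin.val h
      simpa only [torusColor, ← ha, ← hb, ← hK] using this
    rwa [Nat.mod_eq_of_lt hfa, Nat.mod_eq_of_lt hfb] at h'
  have h1 : (⌊K * a⌋₊ : ℝ) ≤ K * a := Nat.floor_le (by positivity)
  have h2 : K * a < ⌊K * a⌋₊ + 1 := Nat.lt_floor_add_one _
  have h3 : (⌊K * b⌋₊ : ℝ) ≤ K * b := Nat.floor_le (by positivity)
  have h4 : K * b < ⌊K * b⌋₊ + 1 := Nat.lt_floor_add_one _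
  rw [heq] at h1 h2
  have habs : |a - b| < 1 / K := by
    rw [abs_lt]
    have hd : (1:ℝ) / K * K = 1 := by field_simp
    constructor
    · nlinarith
    · nlinarith
  calc ‖z - w‖ = ‖((a - b : ℝ) : UnitAddCircle)‖ := by
        have : ((a - b : ℝ) : UnitAddCircle)
            = ((a:ℝ):UnitAddCircle) - ((b:ℝ):UnitAddCircle) :=
          map_sub (QuotientAddGroup.mk' _) a b
        rw [this, haz, hbw]
    _ ≤ |a - b| := norm_coe_le_abs _
    _ < 1 / K := habs

variable {H : Type*} [AddCommGroup H] {d : ℕ}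

/-- Restrict a product-box sum to a sub-box via indicator weights. -/
lemma box_indicator_sum (f : (Fin d → ℕ) → H) (b : Fin d → ℕ) (s : Fin d → Finset ℕ)
    (hs : ∀ i, s i ⊆ Finset.Icc 1 (b i)) :
    ∑ x ∈ Fintype.piFinset s, f x
      = ∑ x ∈ Fintype.piFinset (fun i => Finset.Icc 1 (b i)),
          (∏ i, (if x i ∈ s i then (1 : ℤ) else 0)) • f x := by
  rw [← Finset.sum_subset (Fintype.piFinset_subset _ _ hs)]
  · refine Finset.sum_congr rfl fun x hx => ?_
    rw [Fintype.mem_piFinset] at hx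
    have : (∏ i, (if x i ∈ s i then (1 : ℤ) else 0)) = 1 :=
      Finset.prod_eq_one fun i _ => if_pos (hx i)
    rw [this, one_smul]
  · intro x _ hx
    rw [Fintype.mem_piFinset] at hx
    push_neg at hx
    obtain ⟨i, hi⟩ := hx
    have : (∏ j, (if x j ∈ s j then (1 : ℤ) else 0)) = 0 :=
      Finset.prod_eq_zero (Finset.mem_univ i) (if_neg hi)
    rw [this, zero_smul]

/-- Inclusion–exclusion for sums over product boxes `∏ (aᵢ, bᵢ]`. -/
lemma box_sum_corners (f : (Fin d → ℕ) → H) (a b : Fin d → ℕ) (hab : ∀ i, a i ≤ b i) :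
    ∑ x ∈ Fintype.piFinset (fun i => Finset.Ioc (a i) (b i)), f x
      = ∑ S ∈ (Finset.univ : Finset (Fin d)).powerset, ((-1 : ℤ)^S.card) •
          ∑ x ∈ Fintype.piFinset (fun i => Finset.Icc 1 (if i ∈ S then a i else b i)), f x := by
  have hIoc : ∀ i, Finset.Ioc (a i) (b i) ⊆ Finset.Icc 1 (b i) := by
    intro i x hx
    rw [Finset.mem_Ioc] at hx
    rw [Finset.mem_Icc]
    omega
  rw [box_indicator_sum f b _ hIoc]
  have hcorner : ∀ S : Finset (Fin d), ∀ i,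
      Finset.Icc 1 (if i ∈ S then a i else b i) ⊆ Finset.Icc 1 (b i) := by
    intro S i x hx
    rw [Finset.mem_Icc] at hx ⊢
    by_cases h : i ∈ S
    · rw [if_pos h] at hx; exact ⟨hx.1, hx.2.trans (hab i)⟩
    · rwa [if_neg h] at hx
  have hrhs : ∀ S ∈ (Finset.univ : Finset (Fin d)).powerset,
      ((-1 : ℤ)^S.card) • ∑ x ∈ Fintype.piFinset (fun i => Finset.Icc 1 (if i ∈ S then a i else b i)), f x
        = ∑ x ∈ Fintype.piFinset (fun i => Finset.Icc 1 (b i)),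
            (((-1 : ℤ)^S.card) * ∏ i, (if x i ∈ Finset.Icc 1 (if i ∈ S then a i else b i) then (1 : ℤ) else 0)) • f x := by
    intro S _
    rw [box_indicator_sum f b _ (hcorner S), Finset.smul_sum]
    exact Finset.sum_congr rfl fun x _ => by rw [smul_smul]
  rw [Finset.sum_congr rfl hrhs, Finset.sum_comm]
  refine Finset.sum_congr rfl fun x hx => ?_
  rw [Fintype.mem_piFinset] at hx
  rw [← Finset.sum_smul]
  congr 1
  -- pointwise identity between indicator products
  have hxmem : ∀ i, 1 ≤ x i ∧ x i ≤ b i := by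
    intro i; have := hx i; rwa [Finset.mem_Icc] at this
  have key : ∀ i, (if x i ∈ Finset.Ioc (a i) (b i) then (1 : ℤ) else 0)
      = (- (if x i ∈ Finset.Icc 1 (a i) then (1 : ℤ) else 0)) + 1 := by
    intro i
    by_cases h : x i ≤ a i
    · rw [if_neg, if_pos]
      · ring
      · rw [Finset.mem_Icc]; exact ⟨(hxmem i).1, h⟩
      · rw [Finset.mem_Ioc]; push_neg; intro hc; omega
    · rw [if_pos, if_neg]
      · ring
      · rw [Finset.mem_Icc]; push_neg; intro _; omega
      · rw [Finset.mem_Ioc]; exact ⟨by omega, (hxmem i).2⟩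
  rw [Finset.prod_congr rfl (fun i _ => key i), Finset.prod_add]
  refine Finset.sum_congr rfl fun S hS => ?_
  have h1 : ∏ i ∈ Finset.univ \ S, (1 : ℤ) = 1 := Finset.prod_const_one
  rw [h1, mul_one]
  have h2 : ∏ i ∈ S, (-(if x i ∈ Finset.Icc 1 (a i) then (1 : ℤ) else 0))
      = (-1 : ℤ)^S.card * ∏ i ∈ S, (if x i ∈ Finset.Icc 1 (a i) then (1 : ℤ) else 0) := by
    rw [← Finset.prod_const, ← Finset.prod_mul_distrib]
    exact Finset.prod_congr rfl fun i _ => by ring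
  rw [h2]
  congr 1
  -- extend product over S to product over univ
  rw [← Finset.prod_sdiff (Finset.subset_univ S)]
  have h3 : ∏ i ∈ Finset.univ \ S, (if x i ∈ Finset.Icc 1 (if i ∈ S then a i else b i) then (1 : ℤ) else 0) = 1 := by
    refine Finset.prod_eq_one fun i hi => ?_
    rw [Finset.mem_sdiff] at hi
    rw [if_neg hi.2, if_pos]
    rw [Finset.mem_Icc]
    exact hxmem i
  have h4 : ∏ i ∈ S, (if x i ∈ Finset.Icc 1 (if i ∈ S then a i else b i) then (1 : ℤ) else 0)
      = ∏ i ∈ S, (if x i ∈ Finset.Icc 1 (a i) then (1 : ℤ) else 0) := by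
    refine Finset.prod_congr rfl fun i hi => ?_
    rw [if_pos hi]
  rw [h3, h4, one_mul]



lemma norm_neg_one_pow_zsmul {E : Type*} [SeminormedAddCommGroup E] (n : ℕ) (x : E) :
    ‖((-1 : ℤ)^n) • x‖ = ‖x‖ := by
  rcases neg_one_pow_eq_or ℤ n with h | h <;> rw [h]
  · rw [one_smul]
  · rw [neg_one_zsmul, norm_neg]

set_option maxHeartbeats 1000000 in
/-- Step A: blocks on which all order-`d` block derivatives are small. -/
lemma stepA (d m : ℕ) (hd : 1 ≤ d) (δ : ℝ) (hδ : 0 < δ) :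
    ∃ r : ℕ, ∀ φ : Finset ℕ → UnitAddCircle, DegLE (Finset.Icc 1 r) d φ →
      ∃ C : ℕ → Finset ℕ,
        (∀ j ∈ Finset.Icc 1 m, (C j).Nonempty ∧ C j ⊆ Finset.Icc 1 r) ∧
        (∀ j ∈ Finset.Icc 1 m, ∀ j' ∈ Finset.Icc 1 m, j ≠ j' → Disjoint (C j) (C j')) ∧
        (∀ J, J ⊆ Finset.Icc 1 m → J.card = d → ‖Dblk φ ∅ J C‖ < δ) := by
  classical
  set k := ⌊(2:ℝ)^d / δ⌋₊ with hk
  obtain ⟨N, hN⟩ := ramseyFin d (k+1) (2*m) (Nat.succ_pos k)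
  refine ⟨N, fun φ hφ => ?_⟩
  set ω : (Fin d → ℕ) → UnitAddCircle :=
    fun x => if Function.Injective x then Dsing φ ∅ (Finset.image x Finset.univ) else 0 with hω
  set G : (Fin d → ℕ) → UnitAddCircle :=
    fun u => ∑ x ∈ Fintype.piFinset (fun i => Finset.Icc 1 (u i)), ω x with hG
  set χ : Finset ℕ → Fin (k+1) :=
    fun T => if h : T.card = d then torusColor k (G (fun i => T.orderEmbOfFin h i))
             else ⟨0, Nat.succ_pos k⟩ with hχ
  have hNcard : N ≤ (Finset.Icc 1 N).card := by rw [Nat.card_Icc]; omega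
  obtain ⟨W, hWV, hWcard, c, hmono⟩ := hN χ (Finset.Icc 1 N) hNcard
  set w : Fin (2*m) ↪o ℕ := W.orderEmbOfFin hWcard with hw
  have hwmem : ∀ i, w i ∈ W := fun i => W.orderEmbOfFin_mem hWcard i
  have hwrange : ∀ i, 1 ≤ w i ∧ w i ≤ N := by
    intro i
    have := hWV (hwmem i)
    rwa [Finset.mem_Icc] at this
  have hwlt : ∀ i i' : Fin (2*m), i < i' → w i < w i' := fun _ _ h => w.strictMono h
  have hwle : ∀ i i' : Fin (2*m), i ≤ i' → w i ≤ w i' := fun _ _ h => w.monotone h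
  set C : ℕ → Finset ℕ := fun j =>
    if h : 1 ≤ j ∧ j ≤ m then
      Finset.Ioc (w ⟨2*j-2, by omega⟩) (w ⟨2*j-1, by omega⟩) else ∅ with hC
  have hCdef : ∀ j (h : 1 ≤ j ∧ j ≤ m),
      C j = Finset.Ioc (w ⟨2*j-2, by omega⟩) (w ⟨2*j-1, by omega⟩) := by
    intro j h
    simp only [hC, dif_pos h]
  have hCprop : ∀ j ∈ Finset.Icc 1 m, (C j).Nonempty ∧ C j ⊆ Finset.Icc 1 N := by
    intro j hj
    rw [Finset.mem_Icc] at hj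
    rw [hCdef j hj]
    constructor
    · rw [Finset.nonempty_Ioc]
      exact hwlt _ _ (by rw [Fin.mk_lt_mk]; omega)
    · intro x hx
      rw [Finset.mem_Ioc] at hx
      rw [Finset.mem_Icc]
      have h1 := (hwrange ⟨2*j-2, by omega⟩).1
      have h2 := (hwrange ⟨2*j-1, by omega⟩).2
      omega
  have hCdisj : ∀ j ∈ Finset.Icc 1 m, ∀ j' ∈ Finset.Icc 1 m, j ≠ j' → Disjoint (C j) (C j') := by
    have key : ∀ j j', 1 ≤ j → j ≤ m → 1 ≤ j' → j' ≤ m → j < j' → Disjoint (C j) (C j') := by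
      intro j j' h1 h2 h3 h4 hlt
      rw [hCdef j ⟨h1, h2⟩, hCdef j' ⟨h3, h4⟩]
      rw [Finset.disjoint_left]
      intro x hx hx'
      rw [Finset.mem_Ioc] at hx hx'
      have : w ⟨2*j-1, by omega⟩ ≤ w ⟨2*j'-2, by omega⟩ :=
        hwle _ _ (by rw [Fin.mk_le_mk]; omega)
      omega
    intro j hj j' hj' hne
    rw [Finset.mem_Icc] at hj hj'
    rcases lt_or_gt_of_ne hne with h | h
    · exact key j j' hj.1 hj.2 hj'.1 hj'.2 h
    · exact (key j' j hj'.1 hj'.2 hj.1 hj.2 h).symm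
  refine ⟨C, hCprop, hCdisj, ?_⟩
  intro J hJ hJd
  set e := J.orderEmbOfFin hJd with he
  have he_mem : ∀ i, e i ∈ J := fun i => J.orderEmbOfFin_mem hJd i
  have he_bound : ∀ i, 1 ≤ e i ∧ e i ≤ m := by
    intro i
    have := hJ (he_mem i)
    rwa [Finset.mem_Icc] at this
  have he_strict : StrictMono e := e.strictMono
  have he_surj : ∀ j ∈ J, ∃ i, e i = j := by
    intro j hj
    have : (j : ℕ) ∈ Set.range ⇑e := by
      rw [he, Finset.range_orderEmbOfFin]
      exact hj
    exact this
  set a : Fin d → ℕ := fun i => w ⟨2*(e i)-2, by have := he_bound i; omega⟩ with ha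
  set b : Fin d → ℕ := fun i => w ⟨2*(e i)-1, by have := he_bound i; omega⟩ with hb
  have hCe : ∀ i, C (e i) = Finset.Ioc (a i) (b i) := by
    intro i
    rw [hCdef (e i) (he_bound i)]
  have hab : ∀ i, a i ≤ b i := by
    intro i
    refine hwle _ _ ?_
    rw [Fin.mk_le_mk]
    have := he_bound i
    omega
  have hCdisj_i : ∀ i i' : Fin d, i ≠ i' → Disjoint (C (e i)) (C (e i')) := by
    intro i i' hne
    exact hCdisj _ (hJ (he_mem i)) _ (hJ (he_mem i')) (fun hc => hne (he_strict.injective hc))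
  -- step 1: expand the block derivative
  rw [Dblk_eq_sum_Dsing φ ∅ J C (fun j hj j' hj' hne => hCdisj j (hJ hj) j' (hJ hj') hne)]
  set A1 := (J.biUnion C).powerset.filter (fun S => ∀ j ∈ J, ¬ Disjoint S (C j)) with hA1
  have hsplit := Finset.sum_filter_add_sum_filter_not A1 (fun S => S.card ≤ d)
    (fun S => Dsing φ ∅ S)
  rw [← hsplit]
  have hBsub : J.biUnion C ⊆ Finset.Icc 1 N :=
    biUnion_subset.2 fun j hj => (hCprop j (hJ hj)).2
  have hzero : ∑ S ∈ A1.filter (fun S => ¬ S.card ≤ d), Dsing φ ∅ S = 0 := by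
    refine Finset.sum_eq_zero fun S hS => ?_
    rw [Finset.mem_filter, hA1, Finset.mem_filter, Finset.mem_powerset] at hS
    exact Dsing_eq_zero_of_degLE hφ (hS.1.1.trans hBsub) (empty_subset _)
      (disjoint_empty_left _) (by omega)
  rw [hzero, add_zero]
  -- step 2: biject low-order transversals with tuples
  have hbij : ∑ S ∈ A1.filter (fun S => S.card ≤ d), Dsing φ ∅ S
      = ∑ x ∈ Fintype.piFinset (fun i => C (e i)), ω x := by
    refine Finset.sum_nbij'
      (fun S => (fun i => if h : (S ∩ C (e i)).Nonempty then (S ∩ C (e i)).min' h else 0))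
      (fun x => Finset.image x Finset.univ) ?_ ?_ ?_ ?_ ?_
    · intro S hS
      rw [Finset.mem_filter, hA1, Finset.mem_filter] at hS
      obtain ⟨⟨_, hhits⟩, _⟩ := hS
      rw [Fintype.mem_piFinset]
      intro i
      have hne : (S ∩ C (e i)).Nonempty := by
        obtain ⟨x, hx1, hx2⟩ := Finset.not_disjoint_iff.1 (hhits (e i) (he_mem i))
        exact ⟨x, Finset.mem_inter.2 ⟨hx1, hx2⟩⟩
      simp only [dif_pos hne]
      exact (Finset.mem_inter.1 ((S ∩ C (e i)).min'_mem hne)).2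
    · intro x hx
      rw [Fintype.mem_piFinset] at hx
      rw [Finset.mem_filter, hA1, Finset.mem_filter, Finset.mem_powerset]
      refine ⟨⟨?_, ?_⟩, ?_⟩
      · intro y hy
        obtain ⟨i, _, rfl⟩ := Finset.mem_image.1 hy
        exact Finset.mem_biUnion.2 ⟨e i, he_mem i, hx i⟩
      · intro j hj
        obtain ⟨i, rfl⟩ := he_surj j hj
        exact Finset.not_disjoint_iff.2
          ⟨x i, Finset.mem_image_of_mem x (Finset.mem_univ i), hx i⟩
      · calc (Finset.image x Finset.univ).card ≤ Finset.univ.card := Finset.card_image_le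
          _ = d := by rw [Finset.card_univ, Fintype.card_fin]
    · intro S hS
      rw [Finset.mem_filter, hA1, Finset.mem_filter, Finset.mem_powerset] at hS
      obtain ⟨⟨hsub, hhits⟩, hcard⟩ := hS
      set y : Fin d → ℕ :=
        (fun i => if h : (S ∩ C (e i)).Nonempty then (S ∩ C (e i)).min' h else 0) with hy
      have hne : ∀ i, (S ∩ C (e i)).Nonempty := by
        intro i
        obtain ⟨x, hx1, hx2⟩ := Finset.not_disjoint_iff.1 (hhits (e i) (he_mem i))
        exact ⟨x, Finset.mem_inter.2 ⟨hx1, hx2⟩⟩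
      have hyS : ∀ i, y i ∈ S := by
        intro i
        rw [hy]
        simp only [dif_pos (hne i)]
        exact (Finset.mem_inter.1 ((S ∩ C (e i)).min'_mem (hne i))).1
      have hyC : ∀ i, y i ∈ C (e i) := by
        intro i
        rw [hy]
        simp only [dif_pos (hne i)]
        exact (Finset.mem_inter.1 ((S ∩ C (e i)).min'_mem (hne i))).2
      have hyinj : Function.Injective y := by
        intro i i' hii
        by_contra hcon
        exact Finset.disjoint_left.1 (hCdisj_i i i' hcon) (hyC i) (hii ▸ hyC i')
      have hsubS : Finset.image y Finset.univ ⊆ S :=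
        Finset.image_subset_iff.2 fun i _ => hyS i
      have hcardim : (Finset.image y Finset.univ).card = d := by
        rw [Finset.card_image_of_injective _ hyinj, Finset.card_univ, Fintype.card_fin]
      exact Finset.eq_of_subset_of_card_le hsubS (by omega)
    · intro x hx
      rw [Fintype.mem_piFinset] at hx
      funext i
      have hsingle : Finset.image x Finset.univ ∩ C (e i) = {x i} := by
        ext y
        rw [Finset.mem_inter, Finset.mem_image, Finset.mem_singleton]
        constructor
        · rintro ⟨⟨i', _, rfl⟩, hyC⟩
          by_contra hcon
          have hii : i' ≠ i := fun h => hcon (by rw [h])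
          exact Finset.disjoint_left.1 (hCdisj_i i' i hii) (hx i') hyC
        · rintro rfl
          exact ⟨⟨i, Finset.mem_univ i, rfl⟩, hx i⟩
      simp only [hsingle]
      rw [dif_pos (Finset.singleton_nonempty (x i))]
      exact Finset.min'_singleton (x i)
    · intro S hS
      rw [Finset.mem_filter, hA1, Finset.mem_filter, Finset.mem_powerset] at hS
      obtain ⟨⟨hsub, hhits⟩, hcard⟩ := hS
      -- same construction as above
      set y : Fin d → ℕ :=
        (fun i => if h : (S ∩ C (e i)).Nonempty then (S ∩ C (e i)).min' h else 0) with hy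
      have hne : ∀ i, (S ∩ C (e i)).Nonempty := by
        intro i
        obtain ⟨x, hx1, hx2⟩ := Finset.not_disjoint_iff.1 (hhits (e i) (he_mem i))
        exact ⟨x, Finset.mem_inter.2 ⟨hx1, hx2⟩⟩
      have hyS : ∀ i, y i ∈ S := by
        intro i
        rw [hy]; simp only [dif_pos (hne i)]
        exact (Finset.mem_inter.1 ((S ∩ C (e i)).min'_mem (hne i))).1
      have hyC : ∀ i, y i ∈ C (e i) := by
        intro i
        rw [hy]; simp only [dif_pos (hne i)]
        exact (Finset.mem_inter.1 ((S ∩ C (e i)).min'_mem (hne i))).2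
      have hyinj : Function.Injective y := by
        intro i i' hii
        by_contra hcon
        exact Finset.disjoint_left.1 (hCdisj_i i i' hcon) (hyC i) (hii ▸ hyC i')
      have hsubS : Finset.image y Finset.univ ⊆ S :=
        Finset.image_subset_iff.2 fun i _ => hyS i
      have hcardim : (Finset.image y Finset.univ).card = d := by
        rw [Finset.card_image_of_injective _ hyinj, Finset.card_univ, Fintype.card_fin]
      have himg : Finset.image y Finset.univ = S :=
        Finset.eq_of_subset_of_card_le hsubS (by omega)
      rw [hω]
      simp only [if_pos hyinj]
      rw [himg]
  rw [hbij]
  -- step 3: the box identity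
  have hfam : (fun i => C (e i)) = fun i => Finset.Ioc (a i) (b i) := funext hCe
  rw [hfam, box_sum_corners ω a b hab]
  -- step 4: all corners have the same colour
  have hGcol : ∀ S : Finset (Fin d),
      torusColor k (G (fun i => if i ∈ S then a i else b i)) = c := by
    intro S
    set u : Fin d → ℕ := fun i => if i ∈ S then a i else b i with hu
    have hba : ∀ i i' : Fin d, i < i' → b i < a i' := by
      intro i i' h
      have hb1 := he_bound i
      have hb2 := he_bound i'
      have hee : e i < e i' := he_strict h
      exact hwlt ⟨2*(e i)-1, by omega⟩ ⟨2*(e i')-2, by omega⟩ (by rw [Fin.mk_lt_mk]; omega)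
    have humem : ∀ i, u i ∈ W := by
      intro i
      show (if i ∈ S then a i else b i) ∈ W
      by_cases h : i ∈ S
      · rw [if_pos h]; exact hwmem _
      · rw [if_neg h]; exact hwmem _
    have humono : StrictMono u := by
      intro i i' hii
      show (if i ∈ S then a i else b i) < (if i' ∈ S then a i' else b i')
      have h1 := hab i
      have h2 := hab i'
      have h3 := hba i i' hii
      by_cases hm1 : i ∈ S <;> by_cases hm2 : i' ∈ S <;>
        simp only [hm1, hm2, if_true, if_false] <;> omega
    set T := Finset.image u Finset.univ with hT
    have hTcard : T.card = d := by
      rw [hT, Finset.card_image_of_injective _ humono.injective, Finset.card_univ,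
        Fintype.card_fin]
    have hTW : T ⊆ W := Finset.image_subset_iff.2 fun i _ => humem i
    have hcc := hmono T hTW hTcard
    rw [hχ] at hcc
    simp only [dif_pos hTcard] at hcc
    have hueq : ⇑(T.orderEmbOfFin hTcard) = u :=
      (Finset.orderEmbOfFin_unique hTcard
        (fun i => Finset.mem_image_of_mem u (Finset.mem_univ i)) humono).symm
    rw [← hcc]
    exact congrArg (fun f => torusColor k (G f)) (funext fun i => (congrFun hueq i).symm)
  -- step 5: estimate
  have hinner : ∀ S : Finset (Fin d),
      ∑ x ∈ Fintype.piFinset (fun i => Finset.Icc 1 (if i ∈ S then a i else b i)), ω x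
        = G (fun i => if i ∈ S then a i else b i) := fun S => rfl
  set z0 := G (fun i => if i ∈ (∅ : Finset (Fin d)) then a i else b i) with hz0
  have hclose : ∀ S : Finset (Fin d),
      ‖G (fun i => if i ∈ S then a i else b i) - z0‖ < 1/((k:ℝ)+1) := by
    intro S
    exact torusColor_dist (by rw [hGcol S, hGcol ∅])
  have hrw : ∀ S ∈ (Finset.univ : Finset (Fin d)).powerset,
      ((-1 : ℤ)^S.card) •
        (∑ x ∈ Fintype.piFinset (fun i => Finset.Icc 1 (if i ∈ S then a i else b i)), ω x)
      = ((-1 : ℤ)^S.card) • (G (fun i => if i ∈ S then a i else b i) - z0)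
        + ((-1 : ℤ)^S.card) • z0 := by
    intro S _
    rw [hinner S, ← smul_add, sub_add_cancel]
  rw [Finset.sum_congr rfl hrw, Finset.sum_add_distrib]
  have hlast : ∑ S ∈ (Finset.univ : Finset (Fin d)).powerset, ((-1 : ℤ)^S.card) • z0 = 0 := by
    rw [← Finset.sum_smul, Finset.sum_powerset_neg_one_pow_card, if_neg, zero_smul]
    exact Finset.nonempty_iff_ne_empty.1 ⟨⟨0, hd⟩, Finset.mem_univ _⟩
  rw [hlast, add_zero]
  calc ‖∑ S ∈ (Finset.univ : Finset (Fin d)).powerset,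
        ((-1 : ℤ)^S.card) • (G (fun i => if i ∈ S then a i else b i) - z0)‖
      ≤ ∑ S ∈ (Finset.univ : Finset (Fin d)).powerset,
          ‖((-1 : ℤ)^S.card) • (G (fun i => if i ∈ S then a i else b i) - z0)‖ :=
        norm_sum_le _ _
    _ < ∑ S ∈ (Finset.univ : Finset (Fin d)).powerset, (1/((k:ℝ)+1)) := by
        refine Finset.sum_lt_sum_of_nonempty ⟨∅, Finset.mem_powerset.2 (empty_subset _)⟩ ?_
        intro S _
        rw [norm_neg_one_pow_zsmul]
        exact hclose S
    _ = 2^d * (1/((k:ℝ)+1)) := by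
        rw [Finset.sum_const, Finset.card_powerset, Finset.card_univ, Fintype.card_fin,
          nsmul_eq_mul]
        push_cast
        ring
    _ < δ := by
        have hfl : (2:ℝ)^d / δ < (k:ℝ) + 1 := by
          rw [hk]
          exact Nat.lt_floor_add_one _
        have hkpos : (0:ℝ) < (k:ℝ) + 1 := by positivity
        rw [mul_one_div, div_lt_iff₀ hkpos]
        rw [div_lt_iff₀ hδ] at hfl
        nlinarith



variable {ι : Type*} [DecidableEq ι] {H : Type*} [AddCommGroup H]

lemma Dsing_sub' (φ ψ : Finset ι → H) (α T : Finset ι) :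
    Dsing (fun γ => φ γ - ψ γ) α T = Dsing φ α T - Dsing ψ α T := by
  unfold Dsing
  rw [← Finset.sum_sub_distrib]
  exact Finset.sum_congr rfl fun U _ => by rw [← smul_sub]

/-- The main inductive lemma: blocks on which all block derivatives are small. -/
theorem mainL (d : ℕ) : ∀ (s : ℕ) (ε : ℝ), 0 < ε → ∃ r : ℕ,
    ∀ φ : Finset ℕ → UnitAddCircle, DegLE (Finset.Icc 1 r) d φ →
      ∃ B : ℕ → Finset ℕ,
        (∀ j ∈ Finset.Icc 1 s, (B j).Nonempty ∧ B j ⊆ Finset.Icc 1 r) ∧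
        (∀ j ∈ Finset.Icc 1 s, ∀ j' ∈ Finset.Icc 1 s, j ≠ j' → Disjoint (B j) (B j')) ∧
        (∀ J, J ⊆ Finset.Icc 1 s → J.Nonempty → ‖Dblk φ ∅ J B‖ < ε) := by
  induction d with
  | zero =>
    intro s ε hε
    refine ⟨s, fun φ hφ => ⟨fun j => {j}, ?_, ?_, ?_⟩⟩
    · intro j hj
      exact ⟨Finset.singleton_nonempty j, Finset.singleton_subset_iff.2 hj⟩
    · intro j _ j' _ hne
      exact Finset.disjoint_singleton.2 hne
    · intro J hJ hJne
      have : Dblk φ ∅ J (fun j => ({j} : Finset ℕ)) = 0 := by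
        refine Dblk_eq_zero_of_degLE hφ ∅ J _ ?_ ?_ (empty_subset _) ?_ ?_
        · intro j hj j' hj' hne; exact Finset.disjoint_singleton.2 hne
        · intro j hj; exact Finset.singleton_subset_iff.2 (hJ hj)
        · intro j hj; exact Finset.disjoint_singleton_right.2 (Finset.notMem_empty _)
        · exact Finset.card_pos.2 hJne
      rw [this, norm_zero]
      exact hε
  | succ d IH =>
    intro s ε hε
    obtain ⟨m, hm⟩ := IH s (ε/2) (by positivity)
    set δ : ℝ := ε / (2 * 2^m) with hδdef
    have hδ : 0 < δ := by positivity
    obtain ⟨r, hr⟩ := stepA (d+1) m (by omega) δ hδ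
    refine ⟨r, fun φ hφ => ?_⟩
    obtain ⟨C, hCprop, hCdisj, hCsmall⟩ := hr φ hφ
    set ψ : Finset ℕ → UnitAddCircle := fun γ => φ (γ.biUnion C) with hψ
    have hψdeg : DegLE (Finset.Icc 1 m) (d+1) ψ :=
      degLE_blowup hφ (Finset.Icc 1 m) C hCdisj (fun j hj => (hCprop j hj).2)
    set gτ : Finset ℕ → UnitAddCircle :=
      fun S => if S.card = d + 1 then Dsing ψ ∅ S else 0 with hgτ
    set τ : Finset ℕ → UnitAddCircle := fun γ => ∑ S ∈ γ.powerset, gτ S with hτ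
    set ψ' : Finset ℕ → UnitAddCircle := fun γ => ψ γ - τ γ with hψ'
    have hψ'deg : DegLE (Finset.Icc 1 m) d ψ' := by
      intro T α hT hα hdisj hcard
      have h1 : Dsing ψ' α T = Dsing ψ α T - Dsing τ α T := Dsing_sub' ψ τ α T
      have h2 : Dsing τ α T = Dsing ψ ∅ T := by
        rw [hτ, Dsing_sumfun gτ α T hdisj]
        rw [Finset.sum_eq_single ∅]
        · rw [Finset.empty_union, hgτ]
          simp only [if_pos hcard]
        · intro V hV hne
          rw [hgτ]
          simp only []
          rw [if_neg]
          rw [Finset.card_union_of_disjoint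
            (disjoint_of_subset_left (Finset.mem_powerset.1 hV) hdisj), hcard]
          have : 1 ≤ V.card := Finset.card_pos.2 (Finset.nonempty_iff_ne_empty.2 hne)
          omega
        · intro h; exact absurd (Finset.mem_powerset.2 (empty_subset _)) h
      have h3 : Dsing ψ α T = Dsing ψ ∅ T :=
        Dsing_base_indep hψdeg hT hα hdisj hcard
      rw [h1, h2, h3, sub_self]
    obtain ⟨D, hDprop, hDdisj, hDsmall⟩ := hm ψ' hψ'deg
    refine ⟨fun j => (D j).biUnion C, ?_, ?_, ?_⟩
    · intro j hj
      constructor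
      · exact (hDprop j hj).1.biUnion fun i hi => (hCprop i ((hDprop j hj).2 hi)).1
      · exact biUnion_subset.2 fun i hi => (hCprop i ((hDprop j hj).2 hi)).2
    · intro j hj j' hj' hne
      rw [Finset.disjoint_biUnion_left]
      intro i hi
      rw [Finset.disjoint_biUnion_right]
      intro i' hi'
      refine hCdisj i ((hDprop j hj).2 hi) i' ((hDprop j' hj').2 hi') ?_
      intro heq
      exact Finset.disjoint_left.1 (hDdisj j hj j' hj' hne) hi (heq ▸ hi')
    · intro J hJ hJne
      have hkey : Dblk φ ∅ J (fun j => (D j).biUnion C) = Dblk ψ ∅ J D :=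
        (Dblk_blowup φ C J D).symm
      have hsplit : Dblk ψ ∅ J D = Dblk ψ' ∅ J D + Dblk τ ∅ J D := by
        have h := Dblk_sub ψ τ ∅ J D
        rw [hψ'] at *
        rw [h, sub_add_cancel]
      have hDdisjJ : ∀ j ∈ J, ∀ j' ∈ J, j ≠ j' → Disjoint (D j) (D j') :=
        fun j hj j' hj' hne => hDdisj j (hJ hj) j' (hJ hj') hne
      have hDsub : J.biUnion D ⊆ Finset.Icc 1 m :=
        biUnion_subset.2 fun j hj => (hDprop j (hJ hj)).2
      have hexp : Dblk τ ∅ J D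
          = ∑ S ∈ (J.biUnion D).powerset.filter (fun S => ∀ j ∈ J, ¬ Disjoint S (D j)),
              gτ S := by
        rw [← Dblk_sum_powerset gτ J D hDdisjJ]
        unfold Dblk
        refine Finset.sum_congr rfl fun T _ => ?_
        rw [Finset.empty_union]
      have hτnorm : ‖Dblk τ ∅ J D‖ ≤ (2:ℝ)^m * δ := by
        rw [hexp]
        calc ‖∑ S ∈ (J.biUnion D).powerset.filter (fun S => ∀ j ∈ J, ¬ Disjoint S (D j)),
              gτ S‖
            ≤ ∑ S ∈ (J.biUnion D).powerset.filter (fun S => ∀ j ∈ J, ¬ Disjoint S (D j)),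
              ‖gτ S‖ := norm_sum_le _ _
          _ ≤ ((J.biUnion D).powerset.filter
                (fun S => ∀ j ∈ J, ¬ Disjoint S (D j))).card • δ := by
              refine Finset.sum_le_card_nsmul _ _ δ fun S hS => ?_
              rw [Finset.mem_filter, Finset.mem_powerset] at hS
              rw [hgτ]
              by_cases h : S.card = d + 1
              · simp only [if_pos h]
                have h1 : Dsing ψ ∅ S = Dblk φ ∅ S C := by
                  rw [hψ, Dsing_blowup φ C ∅ S, Finset.biUnion_empty]
                rw [h1]
                exact le_of_lt (hCsmall S (hS.1.trans hDsub) h)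
              · simp only [if_neg h, norm_zero]
                exact le_of_lt hδ
          _ ≤ (2:ℝ)^m * δ := by
              rw [nsmul_eq_mul]
              refine mul_le_mul_of_nonneg_right ?_ (le_of_lt hδ)
              calc (((J.biUnion D).powerset.filter
                    (fun S => ∀ j ∈ J, ¬ Disjoint S (D j))).card : ℝ)
                  ≤ ((J.biUnion D).powerset.card : ℝ) := by
                    exact_mod_cast Finset.card_filter_le _ _
                _ = (2:ℝ)^(J.biUnion D).card := by
                    rw [Finset.card_powerset]; push_cast; ring
                _ ≤ (2:ℝ)^m := by
                    refine pow_le_pow_right₀ (by norm_num) ?_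
                    calc (J.biUnion D).card ≤ (Finset.Icc 1 m).card :=
                        Finset.card_le_card hDsub
                      _ = m := by rw [Nat.card_Icc]; omega
      have hψ'norm : ‖Dblk ψ' ∅ J D‖ < ε/2 := hDsmall J hJ hJne
      rw [hkey, hsplit]
      calc ‖Dblk ψ' ∅ J D + Dblk τ ∅ J D‖
          ≤ ‖Dblk ψ' ∅ J D‖ + ‖Dblk τ ∅ J D‖ := norm_add_le _ _
        _ < ε/2 + (2:ℝ)^m * δ := by
            have := hτnorm
            linarith
        _ = ε := by
            rw [hδdef]
            have h2 : (2:ℝ)^m ≠ 0 := by positivity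
            field_simp
            ring
variable {ι : Type*} [DecidableEq ι] {H : Type*} [AddCommGroup H]

lemma Dsing_insert (φ : Finset ι → H) (α T : Finset ι) (x : ι) (hx : x ∉ T) :
    Dsing φ α (insert x T) = Dsing (fsDeriv φ {x}) α T := by
  unfold Dsing fsDeriv
  rw [Finset.sum_powerset_insert hx, ← Finset.sum_add_distrib]
  refine Finset.sum_congr rfl fun U hU => ?_
  have hxU : x ∉ U := fun h => hx (Finset.mem_powerset.1 hU h)
  have e1 : (insert x T).card = T.card + 1 := Finset.card_insert_of_notMem hx
  have e2 : (insert x U).card = U.card + 1 := Finset.card_insert_of_notMem hxU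
  have e3 : α ∪ insert x U = (α ∪ U) ∪ {x} := by
    rw [Finset.union_insert]
    ext y
    simp only [Finset.mem_insert, Finset.mem_union, Finset.mem_singleton]
    tauto
  rw [e1, e2, e3]
  have f1 : T.card + 1 + U.card = (T.card + U.card) + 1 := by omega
  have f2 : T.card + 1 + (U.card + 1) = (T.card + U.card) + 1 + 1 := by omega
  rw [f1, f2, pow_succ, pow_succ, pow_succ]
  rw [mul_neg_one, mul_neg_one, neg_neg, neg_smul, smul_sub]
  abel

lemma iterDeriv_singletons {n : ℕ} (φ : Finset ι → H) (g : Fin n → ι)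
    (hg : Function.Injective g) (α : Finset ι) :
    iterDeriv φ (fun i => ({g i} : Finset ι)) α = Dsing φ α (Finset.image g Finset.univ) := by
  induction n generalizing φ with
  | zero =>
    show φ α = _
    have : Finset.image g Finset.univ = ∅ := by simp
    rw [this]
    unfold Dsing
    simp
  | succ n IH =>
    have step : iterDeriv φ (fun i => ({g i} : Finset ι)) α
        = iterDeriv (fsDeriv φ {g 0}) (fun i : Fin n => ({g i.succ} : Finset ι)) α := rfl
    rw [step, IH (fsDeriv φ {g 0}) (fun i => g i.succ)
      (hg.comp (Fin.succ_injective n))]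
    have himg : Finset.image g Finset.univ
        = insert (g 0) (Finset.image (fun i : Fin n => g i.succ) Finset.univ) := by
      ext y
      simp only [Finset.mem_image, Finset.mem_insert, Finset.mem_univ, true_and]
      constructor
      · rintro ⟨i, rfl⟩
        rcases Fin.eq_zero_or_eq_succ i with h | ⟨j, rfl⟩
        · exact Or.inl (by rw [h])
        · exact Or.inr ⟨j, rfl⟩
      · rintro (rfl | ⟨j, rfl⟩)
        · exact ⟨0, rfl⟩
        · exact ⟨j.succ, rfl⟩
    rw [himg, Dsing_insert]
    intro hc
    rw [Finset.mem_image] at hc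
    obtain ⟨i, _, hi⟩ := hc
    exact (Fin.succ_ne_zero i) (hg hi)

lemma degLE_of_isPolyDeg {ι : Type*} [DecidableEq ι] [LinearOrder ι]
    {A : Finset ι} {d : ℕ} {φ : Finset ι → H}
    (hφ : IsPolyDeg A d φ) : DegLE A d φ := by
  intro T α hT hα hdisj hcard
  set g := T.orderEmbOfFin hcard with hg
  have hgmem : ∀ i, g i ∈ T := fun i => T.orderEmbOfFin_mem hcard i
  have himg : Finset.image (⇑g) Finset.univ = T := by
    refine Finset.eq_of_subset_of_card_le (Finset.image_subset_iff.2 fun i _ => hgmem i) ?_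
    rw [Finset.card_image_of_injective _ g.injective, Finset.card_univ, Fintype.card_fin, hcard]
  have hzero := hφ (fun i => {g i})
    (fun i => Finset.singleton_subset_iff.2 (hT (hgmem i)))
    (fun i j hne => Finset.disjoint_singleton.2 (fun h => hne (g.injective h)))
    α hα
    (fun i => Finset.disjoint_singleton_right.2
      (fun h => Finset.disjoint_left.1 hdisj h (hgmem i)))
  rw [iterDeriv_singletons φ (⇑g) g.injective α, himg] at hzero
  exact hzero

lemma Dblk_reindex {κ κ' : Type*} [DecidableEq κ] [DecidableEq κ']
    (φ : Finset ι → H) (α : Finset ι) (J : Finset κ) (f : κ → κ')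
    (hf : Function.Injective f) (B' : κ' → Finset ι) :
    Dblk φ α (J.image f) B' = Dblk φ α J (fun j => B' (f j)) := by
  unfold Dblk
  rw [Finset.card_image_of_injective _ hf]
  refine Finset.sum_nbij' (fun T' => J.filter (fun x => f x ∈ T')) (fun T => T.image f)
    ?_ ?_ ?_ ?_ ?_
  · intro T' _
    exact Finset.mem_powerset.2 (Finset.filter_subset _ _)
  · intro T hT
    exact Finset.mem_powerset.2
      (Finset.image_subset_image (Finset.mem_powerset.1 hT))
  · intro T' hT'
    rw [Finset.mem_powerset] at hT'
    ext y
    simp only [Finset.mem_image, Finset.mem_filter]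
    constructor
    · rintro ⟨x, ⟨_, hfx⟩, rfl⟩
      exact hfx
    · intro hy
      obtain ⟨x, hx, rfl⟩ := Finset.mem_image.1 (hT' hy)
      exact ⟨x, ⟨hx, hy⟩, rfl⟩
  · intro T hT
    rw [Finset.mem_powerset] at hT
    ext x
    simp only [Finset.mem_filter, Finset.mem_image]
    constructor
    · rintro ⟨hxJ, y, hyT, hfy⟩
      rwa [← hf hfy]
    · intro hx
      exact ⟨hT hx, x, hx, rfl⟩
  · intro T' hT'
    rw [Finset.mem_powerset] at hT'
    have hcards : (J.filter (fun x => f x ∈ T')).card = T'.card := by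
      have himg : (J.filter (fun x => f x ∈ T')).image f = T' := by
        ext y
        simp only [Finset.mem_image, Finset.mem_filter]
        constructor
        · rintro ⟨x, ⟨_, hfx⟩, rfl⟩
          exact hfx
        · intro hy
          obtain ⟨x, hx, rfl⟩ := Finset.mem_image.1 (hT' hy)
          exact ⟨x, ⟨hx, hy⟩, rfl⟩
      conv_rhs => rw [← himg]
      rw [Finset.card_image_of_injective _ hf]
    have hbi : T'.biUnion B' = (J.filter (fun x => f x ∈ T')).biUnion (fun j => B' (f j)) := by
      ext y
      simp only [Finset.mem_biUnion, Finset.mem_filter]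
      constructor
      · rintro ⟨j, hj, hy⟩
        obtain ⟨x, hx, rfl⟩ := Finset.mem_image.1 (hT' hj)
        exact ⟨x, ⟨hx, hj⟩, hy⟩
      · rintro ⟨x, ⟨hxJ, hfx⟩, hy⟩
        exact ⟨f x, hfx, hy⟩
    rw [hcards, hbi]


set_option maxHeartbeats 1000000 in
/-- Proposition: for any d, s ∈ ℕ and ε > 0 there is r such that every
`φ ∈ Pol⁰_d([r], 𝕋)` has a disjoint s-subcollection `B = {b 0, …, b (s-1)}` in `[r]`
such that the subpolynomial `φ↓_B` admits a q-producing function `Φ̂_B : B^d → 𝕋`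
all of whose values are ε-close to 0. -/
theorem pol0_torus_subpolynomial_small_qproducing (d s : ℕ) (ε : ℝ) (hε : 0 < ε) :
    ∃ r : ℕ, ∀ φ : Finset ℕ → UnitAddCircle,
      Pol0 (Finset.Icc 1 r) d φ →
      ∃ b : Fin s → Finset ℕ,
        (∀ j, (b j).Nonempty ∧ b j ⊆ Finset.Icc 1 r) ∧
        (∀ j j', j ≠ j' → Disjoint (b j) (b j')) ∧
        ∃ Φhat : (Fin d → Fin s) → UnitAddCircle,
          (∀ γ : Finset (Fin s),
            φ (γ.biUnion b) = ∑ v ∈ Fintype.piFinset (fun _ : Fin d => γ), Φhat v) ∧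
          (∀ w : Fin d → Fin s, dist (Φhat w) 0 < ε) := by
  classical
  obtain ⟨r, hr⟩ := mainL d s ε hε
  refine ⟨r, fun φ hPol => ?_⟩
  have hdeg : DegLE (Finset.Icc 1 r) d φ := degLE_of_isPolyDeg hPol.1
  obtain ⟨B, hBprop, hBdisj, hBsmall⟩ := hr φ hdeg
  set b : Fin s → Finset ℕ := fun j => B ((j : ℕ) + 1) with hb
  have hmem : ∀ j : Fin s, ((j : ℕ) + 1) ∈ Finset.Icc 1 s := by
    intro j
    rw [Finset.mem_Icc]
    have := j.isLt
    omega
  have hbdisj : ∀ j j' : Fin s, j ≠ j' → Disjoint (b j) (b j') := by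
    intro j j' hne
    refine hBdisj _ (hmem j) _ (hmem j') ?_
    intro h
    exact hne (Fin.ext (by omega))
  have hsmall : ∀ J : Finset (Fin s), J.Nonempty → ‖Dblk φ ∅ J b‖ < ε := by
    intro J hJne
    have hinj : Function.Injective (fun j : Fin s => (j : ℕ) + 1) := by
      intro a a' h
      have h' : (a : ℕ) + 1 = (a' : ℕ) + 1 := h
      exact Fin.ext (by omega)
    have hreind := Dblk_reindex φ ∅ J (fun j : Fin s => (j : ℕ) + 1) hinj B
    rw [← hreind]
    refine hBsmall _ ?_ (hJne.image _)
    intro y hy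
    obtain ⟨j, _, rfl⟩ := Finset.mem_image.1 hy
    exact hmem j
  have hvanish : ∀ J : Finset (Fin s), d + 1 ≤ J.card → Dblk φ ∅ J b = 0 := by
    intro J hJ
    exact Dblk_eq_zero_of_degLE hdeg ∅ J b (fun j _ j' _ hne => hbdisj j j' hne)
      (fun j _ => (hBprop _ (hmem j)).2) (Finset.empty_subset _)
      (fun j _ => Finset.disjoint_empty_left _) hJ
  have hzeroE : Dblk φ ∅ (∅ : Finset (Fin s)) b = 0 := by
    unfold Dblk
    simp [hPol.2]
  set Nf : Finset (Fin s) → ℕ := fun J =>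
    ((Finset.univ : Finset (Fin d → Fin s)).filter
      (fun v => Finset.image v Finset.univ = J)).card with hNf
  have hNfpos : ∀ J : Finset (Fin s), J.Nonempty → J.card ≤ d → Nf J ≠ 0 := by
    intro J hJne hJd
    have hcards : J.card = J.card := rfl
    set emb := J.orderEmbOfFin hcards with hemb
    set v : Fin d → Fin s := fun i =>
      if h : (i : ℕ) < J.card then emb ⟨(i : ℕ), h⟩ else J.min' hJne with hv
    have hvimg : Finset.image v Finset.univ = J := by
      apply Finset.Subset.antisymm
      · refine Finset.image_subset_iff.2 fun i _ => ?_
        rw [hv]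
        by_cases h : (i : ℕ) < J.card
        · simp only [dif_pos h]
          exact J.orderEmbOfFin_mem hcards _
        · simp only [dif_neg h]
          exact J.min'_mem hJne
      · intro y hy
        have : y ∈ Set.range ⇑emb := by
          rw [hemb, Finset.range_orderEmbOfFin]
          exact hy
        obtain ⟨i0, hi0⟩ := this
        have hlt : (i0 : ℕ) < d := lt_of_lt_of_le i0.isLt hJd
        refine Finset.mem_image.2 ⟨⟨(i0 : ℕ), hlt⟩, Finset.mem_univ _, ?_⟩
        rw [hv]
        simp only [dif_pos i0.isLt]
        rw [← hi0]
      
    refine Finset.card_ne_zero_of_mem (a := v) ?_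
    exact Finset.mem_filter.2 ⟨Finset.mem_univ v, hvimg⟩
  set F : Finset (Fin s) → UnitAddCircle := fun J =>
    ((((exists_norm_lift (Dblk φ ∅ J b)).choose / (Nf J : ℝ)) : ℝ) : UnitAddCircle) with hF
  have hkey : ∀ J : Finset (Fin s), Dblk φ ∅ J b = (Nf J) • F J := by
    intro J
    by_cases hN : Nf J = 0
    · rw [hN, zero_smul]
      rcases J.eq_empty_or_nonempty with rfl | hJne
      · exact hzeroE
      · rcases le_or_gt J.card d with h | h
        · exact absurd hN (hNfpos J hJne h)
        · exact hvanish J h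
    · have hspec := (exists_norm_lift (Dblk φ ∅ J b)).choose_spec
      have h0 : ((((Nf J) • ((exists_norm_lift (Dblk φ ∅ J b)).choose / (Nf J : ℝ))) : ℝ)
            : UnitAddCircle)
          = (Nf J) • ((((exists_norm_lift (Dblk φ ∅ J b)).choose / (Nf J : ℝ) : ℝ))
            : UnitAddCircle) :=
        AddMonoidHom.map_nsmul (QuotientAddGroup.mk' _) _ _
      have h2 : (Nf J) • ((exists_norm_lift (Dblk φ ∅ J b)).choose / (Nf J : ℝ))
          = (exists_norm_lift (Dblk φ ∅ J b)).choose := by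
        rw [nsmul_eq_mul]
        field_simp
      rw [show F J = ((((exists_norm_lift (Dblk φ ∅ J b)).choose / (Nf J : ℝ)) : ℝ)
        : UnitAddCircle) from rfl]
      rw [← h0, h2]
      exact hspec.1.symm
  refine ⟨b, fun j => hBprop _ (hmem j), fun j j' hne => hbdisj j j' hne,
    fun v => F (Finset.image v Finset.univ), ?_, ?_⟩
  · intro γ
    have hmoeb : φ (γ.biUnion b) = ∑ J ∈ γ.powerset, Dblk φ ∅ J b := by
      have h1 := sum_Dsing_powerset (fun γ' : Finset (Fin s) => φ (γ'.biUnion b)) ∅ γ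
      rw [Finset.empty_union] at h1
      rw [← h1]
      refine Finset.sum_congr rfl fun J _ => ?_
      rw [Dsing_blowup φ b ∅ J]
      congr 1
    have hmaps : ∀ v ∈ Fintype.piFinset (fun _ : Fin d => γ),
        Finset.image v Finset.univ ∈ γ.powerset := by
      intro v hv
      rw [Fintype.mem_piFinset] at hv
      exact Finset.mem_powerset.2 (Finset.image_subset_iff.2 fun i _ => hv i)
    have hgroup := Finset.sum_fiberwise_of_maps_to hmaps
      (fun v => F (Finset.image v Finset.univ))
    rw [← hgroup, hmoeb]
    refine Finset.sum_congr rfl fun J hJ => ?_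
    have hfib : (Fintype.piFinset (fun _ : Fin d => γ)).filter
        (fun v => Finset.image v Finset.univ = J)
        = Finset.univ.filter (fun v => Finset.image v Finset.univ = J) := by
      ext v
      simp only [Finset.mem_filter, Fintype.mem_piFinset, Finset.mem_univ, true_and]
      constructor
      · rintro ⟨_, h⟩; exact h
      · intro h
        exact ⟨fun i => (Finset.mem_powerset.1 hJ)
          (h ▸ Finset.mem_image_of_mem v (Finset.mem_univ i)), h⟩
    have hconst : ∀ v ∈ (Fintype.piFinset (fun _ : Fin d => γ)).filter
        (fun v => Finset.image v Finset.univ = J),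
        F (Finset.image v Finset.univ) = F J := by
      intro v hv
      rw [(Finset.mem_filter.1 hv).2]
    rw [Finset.sum_congr rfl hconst, Finset.sum_const, hfib]
    exact hkey J
  · intro w
    set J := Finset.image w Finset.univ with hJ
    have hspec := (exists_norm_lift (Dblk φ ∅ J b)).choose_spec
    rw [dist_zero_right]
    calc ‖F J‖ ≤ |(exists_norm_lift (Dblk φ ∅ J b)).choose / (Nf J : ℝ)| :=
        norm_coe_le_abs _
      _ ≤ |(exists_norm_lift (Dblk φ ∅ J b)).choose| := by
          rw [abs_div]
          rcases Nat.eq_zero_or_pos (Nf J) with h | h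
          · rw [h]
            simp
          · refine div_le_self (abs_nonneg _) ?_
            rw [abs_of_nonneg (Nat.cast_nonneg (α := ℝ) (Nf J))]
            exact_mod_cast h
      _ = ‖Dblk φ ∅ J b‖ := hspec.2
      _ < ε := by
          rcases J.eq_empty_or_nonempty with he | hJne
          · rw [he, hzeroE, norm_zero]
            exact hε
          · exact hsmall J hJne
end

section
/- For any d, s ∈ ℕ and ε > 0 there exists r ∈ ℕ such that for any polynomial mapping φ ∈ Pol⁰_d([r], 𝕋) there exists a disjoint s-subcollection B in [r] such that the t-producing function Φ̃_B of the subpolynomial φ↓_B satisfies dist(Φ̃_B(u), 0) < ε for every u ∈ B^{(≤d)}. -/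
open Finset

section helpers

variable {ι H : Type*} [DecidableEq ι] [AddCommGroup H]

lemma biUnion_union'_s8 {κ : Type*} [DecidableEq κ] (s t : Finset κ) (f : κ → Finset ι) :
    (s ∪ t).biUnion f = s.biUnion f ∪ t.biUnion f := by
  ext x; simp [mem_biUnion, or_and_right, exists_or]

lemma powerset_univ_map_succ (n : ℕ) :
    ((univ : Finset (Fin n)).map ⟨Fin.succ, Fin.succ_injective n⟩).powerset
      = (univ : Finset (Fin n)).powerset.image
          (fun v => v.map ⟨Fin.succ, Fin.succ_injective n⟩) := by
  ext t
  simp only [mem_powerset, mem_image]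
  constructor
  · intro ht
    refine ⟨univ.filter (fun j => j.succ ∈ t), subset_univ _, ?_⟩
    ext x
    simp only [mem_map, mem_filter, mem_univ, true_and, Function.Embedding.coeFn_mk]
    constructor
    · rintro ⟨j, hj, rfl⟩; exact hj
    · intro hx
      obtain ⟨j, -, rfl⟩ := mem_map.mp (ht hx)
      exact ⟨j, hx, rfl⟩
  · rintro ⟨v, -, rfl⟩
    exact map_subset_map.mpr (subset_univ v)

lemma sum_powerset_univ_succ {n : ℕ} {M : Type*} [AddCommMonoid M]
    (f : Finset (Fin (n + 1)) → M) :
    ∑ u ∈ (univ : Finset (Fin (n + 1))).powerset, f u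
      = ∑ v ∈ (univ : Finset (Fin n)).powerset,
          (f (v.map ⟨Fin.succ, Fin.succ_injective n⟩)
            + f (insert 0 (v.map ⟨Fin.succ, Fin.succ_injective n⟩))) := by
  have h0 : (0 : Fin (n+1)) ∉ (univ : Finset (Fin n)).map ⟨Fin.succ, Fin.succ_injective n⟩ := by
    simp [Fin.succ_ne_zero]
  rw [Fin.univ_succ, cons_eq_insert, powerset_insert, sum_union, sum_image, sum_add_distrib,
    powerset_univ_map_succ, sum_image, sum_image]
  · intro x _ y _ h
    exact Finset.map_injective _ h
  · intro x _ y _ h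
    exact Finset.map_injective _ h
  · intro x hx y hy h
    have h0v : (0 : Fin (n+1)) ∉ x := fun h' => by
      simpa [Fin.succ_ne_zero] using mem_powerset.mp hx h'
    have h0v' : (0 : Fin (n+1)) ∉ y := fun h' => by
      simpa [Fin.succ_ne_zero] using mem_powerset.mp hy h'
    rw [← erase_insert h0v, ← erase_insert h0v', h]
  · rw [disjoint_left]
    intro t ht ht'
    simp only [mem_image, mem_powerset] at ht ht'
    obtain ⟨v, -, rfl⟩ := ht'
    exact h0 (ht (mem_insert_self _ _))

lemma map_succ_biUnion {n : ℕ} (v : Finset (Fin n)) (β : Fin (n+1) → Finset ι) :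
    (v.map ⟨Fin.succ, Fin.succ_injective n⟩).biUnion β = v.biUnion (fun i => β i.succ) := by
  rw [map_eq_image, image_biUnion]; rfl

lemma iterDeriv_eq_sum : ∀ {n : ℕ} (φ : Finset ι → H) (β : Fin n → Finset ι) (α : Finset ι),
    iterDeriv φ β α
      = ∑ v ∈ (univ : Finset (Fin n)).powerset, (-1 : ℤ) ^ (n + v.card) • φ (α ∪ v.biUnion β)
  | 0, φ, β, α => by simp [iterDeriv]
  | n+1, φ, β, α => by
      rw [show iterDeriv φ β = iterDeriv (fsDeriv φ (β 0)) (fun i => β i.succ) from rfl,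
        iterDeriv_eq_sum (fsDeriv φ (β 0)) (fun i => β i.succ) α, sum_powerset_univ_succ]
      refine sum_congr rfl fun v _ => ?_
      have h0v : (0 : Fin (n+1)) ∉ v.map ⟨Fin.succ, Fin.succ_injective n⟩ := by
        simp [Fin.succ_ne_zero]
    -- unfold
      rw [fsDeriv, card_insert_of_notMem h0v, card_map, biUnion_insert,
        map_succ_biUnion]
      have e1 : (-1 : ℤ) ^ (n + 1 + v.card) = -(-1 : ℤ) ^ (n + v.card) := by
        rw [show n + 1 + v.card = (n + v.card) + 1 by omega, pow_succ]; ring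
      have e2 : (-1 : ℤ) ^ (n + 1 + (v.card + 1)) = (-1 : ℤ) ^ (n + v.card) := by
        rw [show n + 1 + (v.card + 1) = (n + v.card) + 2 by omega, pow_add]; ring
      rw [e1, e2, smul_sub]
      have e3 : α ∪ (β 0 ∪ v.biUnion fun i => β i.succ)
          = (α ∪ v.biUnion fun i => β i.succ) ∪ β 0 := by
        rw [union_comm (β 0), union_assoc]
      rw [e3, neg_smul]
      abel


lemma sum_moebius_eq {κ : Type*} [DecidableEq κ] (g : Finset κ → H) (γ : Finset κ) :
    ∑ u ∈ γ.powerset, ∑ v ∈ u.powerset, (-1 : ℤ) ^ (u.card + v.card) • g v = g γ := by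
  classical
  rw [sum_comm' (s := γ.powerset) (t := fun u => u.powerset) (t' := γ.powerset)
    (s' := fun v => γ.powerset.filter (fun u => v ⊆ u))
    (by intro u v; simp only [mem_powerset, mem_filter, mem_powerset]
        constructor
        · rintro ⟨h1, h2⟩; exact ⟨⟨h1, h2⟩, h2.trans h1⟩
        · rintro ⟨⟨h1, h2⟩, h3⟩; exact ⟨h1, h2⟩)]
  have key : ∀ v ∈ γ.powerset,
      (∑ u ∈ γ.powerset.filter (fun u => v ⊆ u), (-1 : ℤ) ^ (u.card + v.card) • g v)
        = (if v = γ then 1 else 0 : ℤ) • g v := by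
    intro v hv
    rw [mem_powerset] at hv
    rw [← sum_smul]
    congr 1
    have : ∑ u ∈ γ.powerset.filter (fun u => v ⊆ u), (-1 : ℤ) ^ (u.card + v.card)
        = ∑ w ∈ (γ \ v).powerset, (-1 : ℤ) ^ (w.card + 2 * v.card) := by
      refine sum_nbij' (fun u => u \ v) (fun w => v ∪ w) ?_ ?_ ?_ ?_ ?_
      · intro u hu
        simp only [mem_filter, mem_powerset] at hu
        exact mem_powerset.mpr (sdiff_subset_sdiff hu.1 Subset.rfl)
      · intro w hw
        simp only [mem_powerset] at hw
        refine mem_filter.mpr ⟨mem_powerset.mpr (union_subset hv (hw.trans sdiff_subset)), subset_union_left⟩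
      · intro u hu
        simp only [mem_filter, mem_powerset] at hu
        show v ∪ (u \ v) = u
        exact union_sdiff_of_subset hu.2
      · intro w hw
        simp only [mem_powerset] at hw
        have : Disjoint v w := (disjoint_sdiff.mono_left (le_refl _)).mono_right hw
        show (v ∪ w) \ v = w
        exact union_sdiff_cancel_left this
      · intro u hu
        simp only [mem_filter, mem_powerset] at hu
        have hc : (u \ v).card + v.card = u.card := card_sdiff_add_card_eq_card hu.2
        show (-1 : ℤ) ^ (u.card + v.card) = (-1 : ℤ) ^ ((u \ v).card + 2 * v.card)
        congr 1
        omega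
    rw [this]
    have : ∀ w : Finset κ, (-1 : ℤ) ^ (w.card + 2 * v.card) = (-1 : ℤ) ^ w.card := by
      intro w; rw [pow_add, pow_mul]; ring
    rw [sum_congr rfl (fun w _ => this w), Finset.sum_powerset_neg_one_pow_card]
    by_cases h : v = γ
    · simp [h]
    · have : γ \ v ≠ ∅ := by
        intro he
        exact h (le_antisymm hv (sdiff_eq_empty_iff_subset.mp he))
      simp [this, h]
  rw [sum_congr rfl key]
  simp only [ite_smul, one_smul, zero_smul]
  rw [Finset.sum_ite_eq' γ.powerset γ g]
  simp [mem_powerset_self]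

end helpers

section three
variable {ι H : Type*} [DecidableEq ι] [AddCommGroup H]

lemma sum_powerset_decomp {κ M : Type*} [DecidableEq κ] [AddCommMonoid M]
    (u w : Finset κ) (hw : w ⊆ u) (F : Finset κ → M) :
    ∑ v ∈ u.powerset, F v = ∑ t ∈ (u \ w).powerset, ∑ v' ∈ w.powerset, F (t ∪ v') := by
  rw [← sum_product']
  refine sum_nbij' (fun v => (v \ w, v ∩ w)) (fun p => p.1 ∪ p.2) ?_ ?_ ?_ ?_ ?_
  · intro v hv
    rw [mem_powerset] at hv
    exact mem_product.mpr ⟨mem_powerset.mpr (sdiff_subset_sdiff hv Subset.rfl),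
      mem_powerset.mpr inter_subset_right⟩
  · intro p hp
    obtain ⟨h1, h2⟩ := mem_product.mp hp
    rw [mem_powerset] at h1 h2
    exact mem_powerset.mpr (union_subset (h1.trans sdiff_subset) (h2.trans hw))
  · intro v _
    show (v \ w) ∪ (v ∩ w) = v
    exact sdiff_union_inter v w
  · intro p hp
    obtain ⟨h1, h2⟩ := mem_product.mp hp
    rw [mem_powerset] at h1 h2
    have hd : Disjoint p.1 w := sdiff_disjoint.mono_left h1
    show ((p.1 ∪ p.2) \ w, (p.1 ∪ p.2) ∩ w) = p
    have e1 : (p.1 ∪ p.2) \ w = p.1 := by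
      rw [union_sdiff_distrib, sdiff_eq_empty_iff_subset.mpr h2, union_empty,
        hd.sdiff_eq_left]
    have e2 : (p.1 ∪ p.2) ∩ w = p.2 := by
      have h0 : p.1 ∩ w = ∅ := by rwa [← disjoint_iff_inter_eq_empty]
      rw [union_inter_distrib_right, h0, empty_union, inter_eq_left.mpr h2]
    rw [e1, e2]
  · intro v _
    show F v = F ((v \ w) ∪ (v ∩ w))
    rw [sdiff_union_inter]

lemma alt_vanish {A : Finset ι} {d : ℕ} {φ : Finset ι → H} (hφ : IsPolyDeg A d φ)
    {κ : Type*} [DecidableEq κ] [LinearOrder κ] (b : κ → Finset ι) (w : Finset κ)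
    (hcard : w.card = d + 1) (hsub : ∀ j ∈ w, b j ⊆ A)
    (hdisj : ∀ j j', j ≠ j' → Disjoint (b j) (b j'))
    (α : Finset ι) (hα : α ⊆ A) (hαb : ∀ j ∈ w, Disjoint α (b j)) :
    ∑ v ∈ w.powerset, (-1 : ℤ) ^ v.card • φ (α ∪ v.biUnion b) = 0 := by
  classical
  let e := w.orderIsoOfFin hcard
  set f : Fin (d + 1) → κ := fun i => (e i : κ) with hf
  have hfw : ∀ i, f i ∈ w := fun i => (e i).2
  have hfinj : Function.Injective f := fun i j h => e.injective (Subtype.ext h)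
  have limg : ∀ v ∈ w.powerset, ((univ : Finset (Fin (d+1))).filter (fun i => f i ∈ v)).image f = v := by
    intro v hv
    rw [mem_powerset] at hv
    ext x
    simp only [mem_image, mem_filter, mem_univ, true_and]
    constructor
    · rintro ⟨i, hi, rfl⟩; exact hi
    · intro hx
      refine ⟨e.symm ⟨x, hv hx⟩, ?_, ?_⟩
      · show f _ ∈ v
        simp only [hf, OrderIso.apply_symm_apply]
        exact hx
      · simp only [hf, OrderIso.apply_symm_apply]
  have key : ∑ v ∈ w.powerset, (-1 : ℤ) ^ (d + 1 + v.card) • φ (α ∪ v.biUnion b)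
      = iterDeriv φ (fun i => b (f i)) α := by
    rw [iterDeriv_eq_sum]
    refine sum_nbij' (fun v => (univ : Finset (Fin (d+1))).filter (fun i => f i ∈ v))
      (fun S => S.image f) ?_ ?_ ?_ ?_ ?_
    · intro v _; exact mem_powerset.mpr (subset_univ _)
    · intro S _
      exact mem_powerset.mpr (fun x hx => by
        obtain ⟨i, -, rfl⟩ := mem_image.mp hx; exact hfw i)
    · intro v hv; exact limg v hv
    · intro S _
      ext i
      simp only [mem_filter, mem_univ, true_and, mem_image]
      constructor
      · rintro ⟨i', hi', h⟩; exact hfinj h ▸ hi'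
      · intro hi; exact ⟨i, hi, rfl⟩
    · intro v hv
      have h1 : ((univ : Finset (Fin (d+1))).filter (fun i => f i ∈ v)).card = v.card := by
        conv_rhs => rw [← limg v hv]
        rw [card_image_of_injective _ hfinj]
      have h2 : ((univ : Finset (Fin (d+1))).filter (fun i => f i ∈ v)).biUnion (fun i => b (f i))
          = v.biUnion b := by
        conv_rhs => rw [← limg v hv]
        rw [image_biUnion]
      rw [h1, h2]
  have hzero : iterDeriv φ (fun i => b (f i)) α = 0 := by
    refine hφ _ (fun i => hsub _ (hfw i)) (fun i j hij => hdisj _ _ (fun h => hij (hfinj h))) α hα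
      (fun i => hαb _ (hfw i))
  calc ∑ v ∈ w.powerset, (-1 : ℤ) ^ v.card • φ (α ∪ v.biUnion b)
      = ∑ v ∈ w.powerset, (-1 : ℤ) ^ (d+1) • ((-1 : ℤ) ^ (d + 1 + v.card) • φ (α ∪ v.biUnion b)) := by
        refine sum_congr rfl fun v _ => ?_
        rw [smul_smul, ← pow_add, show d + 1 + (d + 1 + v.card) = v.card + 2 * (d + 1) by omega,
          pow_add, pow_mul]
        norm_num
    _ = (-1 : ℤ) ^ (d+1) • ∑ v ∈ w.powerset, (-1 : ℤ) ^ (d + 1 + v.card) • φ (α ∪ v.biUnion b) := by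
        rw [smul_sum]
    _ = 0 := by rw [key, hzero, smul_zero]

end three

section four

open AddCircle

noncomputable def tcol (Q : ℕ) (hQ : 0 < Q) (z : UnitAddCircle) : Fin Q :=
  ⟨⌊(Q : ℝ) * ((AddCircle.equivIco 1 0 z : ℝ))⌋₊, by
    have hx := (AddCircle.equivIco 1 0 z).2
    have hx0 : (0:ℝ) ≤ (AddCircle.equivIco 1 0 z : ℝ) := hx.1
    have hx1 : ((AddCircle.equivIco 1 0 z : ℝ)) < 1 := by
      have h2 := hx.2; linarith
    have hQ' : (0:ℝ) < Q := by exact_mod_cast hQ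
    rw [Nat.floor_lt (mul_nonneg hQ'.le hx0)]
    calc (Q:ℝ) * (AddCircle.equivIco 1 0 z : ℝ) < Q * 1 := by
          exact mul_lt_mul_of_pos_left hx1 hQ'
      _ = Q := mul_one _⟩

lemma norm_unitAddCircle_coe_le (x : ℝ) : ‖((x : ℝ) : UnitAddCircle)‖ ≤ |x| := by
  simpa [Real.norm_eq_abs] using QuotientAddGroup.norm_mk_le_norm (S := AddSubgroup.zmultiples (1:ℝ)) (m := x)

lemma coe_equivIco_self (z : UnitAddCircle) :
    (((AddCircle.equivIco 1 0 z : ℝ)) : UnitAddCircle) = z :=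
  (AddCircle.equivIco 1 0).symm_apply_apply z

lemma tcol_dist {Q : ℕ} (hQ : 0 < Q) {z z' : UnitAddCircle}
    (h : tcol Q hQ z = tcol Q hQ z') : dist z z' < 1 / Q := by
  set x : ℝ := (AddCircle.equivIco 1 0 z : ℝ) with hxdef
  set x' : ℝ := (AddCircle.equivIco 1 0 z' : ℝ) with hxdef'
  have hQ' : (0:ℝ) < Q := by exact_mod_cast hQ
  have hfl : ⌊(Q : ℝ) * x⌋₊ = ⌊(Q : ℝ) * x'⌋₊ := by
    have := congrArg Fin.val h
    simpa [tcol] using this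
  have hx0 : (0:ℝ) ≤ x := (AddCircle.equivIco 1 0 z).2.1
  have hx0' : (0:ℝ) ≤ x' := (AddCircle.equivIco 1 0 z').2.1
  have h1 : (↑⌊(Q : ℝ) * x⌋₊ : ℝ) ≤ (Q : ℝ) * x := Nat.floor_le (mul_nonneg hQ'.le hx0)
  have h2 : ((Q : ℝ) * x) < ⌊(Q : ℝ) * x⌋₊ + 1 := Nat.lt_floor_add_one _
  have h1' : (↑⌊(Q : ℝ) * x'⌋₊ : ℝ) ≤ (Q : ℝ) * x' := Nat.floor_le (mul_nonneg hQ'.le hx0')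
  have h2' : ((Q : ℝ) * x') < ⌊(Q : ℝ) * x'⌋₊ + 1 := Nat.lt_floor_add_one _
  have hflR : ((⌊(Q : ℝ) * x⌋₊ : ℝ)) = ((⌊(Q : ℝ) * x'⌋₊ : ℝ)) := by exact_mod_cast hfl
  have habs : |x - x'| < 1 / Q := by
    rw [abs_sub_lt_iff]
    constructor <;> rw [lt_div_iff₀ hQ'] <;> nlinarith [h1, h2, h1', h2', hflR]
  have hzz : z - z' = (((x - x' : ℝ)) : UnitAddCircle) := by
    rw [← coe_equivIco_self z, ← coe_equivIco_self z', ← hxdef, ← hxdef']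
    push_cast
    rfl
  calc dist z z' = ‖z - z'‖ := dist_eq_norm _ _
    _ = ‖(((x - x' : ℝ)) : UnitAddCircle)‖ := by rw [hzz]
    _ ≤ |x - x'| := norm_unitAddCircle_coe_le _
    _ < 1 / Q := habs

end four

section five

open Combinatorics

lemma small_values (d : ℕ) :
    ∀ (s : ℕ) (ε : ℝ), 0 < ε →
    ∃ r : ℕ, ∀ φ : Finset ℕ → UnitAddCircle, Pol0 (Finset.Icc 1 r) d φ →
      ∃ b : Fin s → Finset ℕ,
        (∀ j, (b j).Nonempty ∧ b j ⊆ Finset.Icc 1 r) ∧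
        (∀ j j', j ≠ j' → Disjoint (b j) (b j')) ∧
        ∀ t : Finset (Fin s), t.Nonempty → ‖φ (t.biUnion b)‖ < ε := by
  induction d with
  | zero =>
    intro s ε hε
    refine ⟨s, fun φ hφ => ?_⟩
    refine ⟨fun j => {(j : ℕ) + 1}, ?_, ?_, ?_⟩
    · intro j
      refine ⟨singleton_nonempty _, ?_⟩
      rw [singleton_subset_iff, Finset.mem_Icc]
      have := j.isLt
      omega
    · intro j j' hjj'
      rw [Finset.disjoint_singleton]
      exact fun hh => hjj' (Fin.ext (Nat.succ_injective hh))
    · intro t _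
      have hsub : t.biUnion (fun j => ({(j : ℕ) + 1} : Finset ℕ)) ⊆ Finset.Icc 1 s := by
        refine biUnion_subset.mpr fun j _ => ?_
        rw [singleton_subset_iff, Finset.mem_Icc]
        have := j.isLt
        omega
      have hsing : ∀ i j : Fin 1, i = j := by decide
      have h0 := hφ.1 (fun _ => t.biUnion (fun j => ({(j : ℕ) + 1} : Finset ℕ)))
        (fun _ => hsub) (fun i j hij => absurd (hsing i j) hij) ∅
        (empty_subset _) (fun _ => disjoint_empty_left _)
      have hiter : iterDeriv φ (fun _ : Fin 1 => t.biUnion (fun j => ({(j : ℕ) + 1} : Finset ℕ))) ∅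
          = φ (∅ ∪ t.biUnion (fun j => ({(j : ℕ) + 1} : Finset ℕ)))
            - φ ∅ := rfl
      rw [hiter, empty_union, hφ.2, sub_zero] at h0
      rw [h0, norm_zero]
      exact hε
  | succ d ih =>
    intro s ε hε
    obtain ⟨k, hk⟩ := ih s (ε / 2) (half_pos hε)
    set Q : ℕ := ⌈(2:ℝ)/ε⌉₊ + 1 with hQdef
    have hQ : 0 < Q := Nat.succ_pos _
    have hQ' : (0:ℝ) < Q := by exact_mod_cast hQ
    have hQε : 1 / (Q:ℝ) < ε / 2 := by
      have h1 : (2:ℝ)/ε < Q := by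
        refine lt_of_le_of_lt (Nat.le_ceil _) ?_
        exact_mod_cast Nat.lt_succ_self _
      rw [div_lt_div_iff₀ hQ' two_pos]
      have h2 : 2 < (Q:ℝ) * ε := by
        rw [div_lt_iff₀ hε] at h1
        linarith
      linarith
    obtain ⟨n, hn⟩ := Combinatorics.Subspace.exists_mono_in_high_dimension_fin
      Bool (Fin Q) (Fin k)
    refine ⟨n, fun φ hφ => ?_⟩
    classical
    set fι : Fin n → ℕ := fun i => (i : ℕ) + 1 with hfι
    have hfinj : Function.Injective fι := by
      intro a b h
      exact Fin.ext (Nat.succ_injective h)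
    have himg : ∀ S : Finset (Fin n), S.image fι ⊆ Finset.Icc 1 n := by
      intro S m hm
      obtain ⟨i, -, rfl⟩ := mem_image.mp hm
      show (i : ℕ) + 1 ∈ Finset.Icc 1 n
      rw [Finset.mem_Icc]
      have := i.isLt
      omega
    set T : (Fin n → Bool) → Finset ℕ :=
      fun y => (univ.filter (fun i => y i = true)).image fι with hT
    obtain ⟨l, c0, hl⟩ := hn (fun y => tcol Q hQ (φ (T y)))
    set W : ℕ → Finset ℕ := fun m =>
      (univ.filter (fun i : Fin n =>
        ∃ e : Fin k, (e : ℕ) + 1 = m ∧ l.idxFun i = Sum.inr e)).image fι with hW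
    set A0 : Finset ℕ :=
      (univ.filter (fun i : Fin n => l.idxFun i = Sum.inl true)).image fι with hA0
    -- key combinatorial identity
    have hKey : ∀ v : Finset ℕ,
        T (l (fun e => decide ((e : ℕ) + 1 ∈ v))) = A0 ∪ v.biUnion W := by
      intro v
      ext m
      simp only [hT, hW, hA0, mem_image, mem_filter, mem_univ, true_and, mem_union,
        mem_biUnion]
      constructor
      · rintro ⟨i, hi, rfl⟩
        rcases hc : l.idxFun i with a | e
        · left
          have ha : a = true := by
            rw [Combinatorics.Subspace.apply_inl hc] at hi
            exact hi
          exact ⟨i, by rw [hc, ha], rfl⟩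
        · right
          have hxe : decide ((e : ℕ) + 1 ∈ v) = true := by
            rw [Combinatorics.Subspace.apply_inr hc] at hi
            exact hi
          exact ⟨(e : ℕ) + 1, of_decide_eq_true hxe, ⟨i, ⟨e, rfl, hc⟩, rfl⟩⟩
      · rintro (⟨i, hc, rfl⟩ | ⟨m', hm', ⟨i, ⟨e, he, hc⟩, rfl⟩⟩)
        · exact ⟨i, by rw [Combinatorics.Subspace.apply_inl hc], rfl⟩
        · refine ⟨i, ?_, rfl⟩
          rw [Combinatorics.Subspace.apply_inr hc]
          exact decide_eq_true (he ▸ hm')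
    have hmono : ∀ v : Finset ℕ, tcol Q hQ (φ (A0 ∪ v.biUnion W)) = c0 := by
      intro v
      rw [← hKey v]
      exact hl _
    have hcA0 : tcol Q hQ (φ A0) = c0 := by
      have := hmono ∅
      simpa using this
    -- subset facts
    have hA0sub : A0 ⊆ Finset.Icc 1 n := himg _
    have hWsub : ∀ m, W m ⊆ Finset.Icc 1 n := fun m => himg _
    -- disjointness facts
    have hWW : ∀ m m', m ≠ m' → Disjoint (W m) (W m') := by
      intro m m' hmm'
      rw [disjoint_left]
      intro x hx hx'
      simp only [hW, mem_image, mem_filter, mem_univ, true_and] at hx hx'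
      obtain ⟨i, ⟨e, he, hc⟩, rfl⟩ := hx
      obtain ⟨i', ⟨e', he', hc'⟩, hxx⟩ := hx'
      have : i' = i := hfinj hxx
      subst this
      rw [hc] at hc'
      have : e' = e := (Sum.inr.inj hc').symm
      subst this
      exact hmm' (he ▸ he')
    have hA0W : ∀ m, Disjoint A0 (W m) := by
      intro m
      rw [disjoint_left]
      intro x hx hx'
      simp only [hA0, hW, mem_image, mem_filter, mem_univ, true_and] at hx hx'
      obtain ⟨i, hc, rfl⟩ := hx
      obtain ⟨i', ⟨e, he, hc'⟩, hxx⟩ := hx'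
      have : i' = i := hfinj hxx
      subst this
      rw [hc] at hc'
      cases hc'
    have hA0vW : ∀ v : Finset ℕ, Disjoint A0 (v.biUnion W) := by
      intro v
      exact (disjoint_biUnion_right _ _ _).mpr fun m _ => hA0W m
    have hDW : ∀ v v' : Finset ℕ, Disjoint v v' → Disjoint (v.biUnion W) (v'.biUnion W) := by
      intro v v' hvv'
      refine (disjoint_biUnion_left _ _ _).mpr fun m hm => ?_
      refine (disjoint_biUnion_right _ _ _).mpr fun m' hm' => ?_
      exact hWW m m' (fun h => (disjoint_left.mp hvv') hm (h ▸ hm'))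
    -- the derived polynomial
    set ρ : Finset ℕ → UnitAddCircle :=
      fun v => φ (A0 ∪ v.biUnion W) - φ A0 - φ (v.biUnion W) with hρ
    have hρPol : Pol0 (Finset.Icc 1 k) d ρ := by
      constructor
      · intro β hβA hβd α hα hαβ
        set β'' : Fin (d + 1) → Finset ℕ := fun i => (β i).biUnion W with hβ''
        rw [iterDeriv_eq_sum]
        have hterm : ∀ v ∈ (univ : Finset (Fin (d+1))).powerset,
            (-1:ℤ) ^ (d + 1 + v.card) • ρ (α ∪ v.biUnion β)
              = (-1:ℤ) ^ (d + 1 + v.card) •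
                  (fsDeriv φ A0 ((α.biUnion W) ∪ v.biUnion β''))
                - (-1:ℤ) ^ (d + 1 + v.card) • φ A0 := by
          intro v _
          rw [← smul_sub]
          congr 1
          have hBU : (α ∪ v.biUnion β).biUnion W
              = α.biUnion W ∪ v.biUnion β'' := by
            rw [biUnion_union'_s8, biUnion_biUnion]
          rw [hρ]
          simp only [hBU, fsDeriv]
          rw [union_comm (α.biUnion W ∪ v.biUnion β'') A0]
          abel
        rw [sum_congr rfl hterm, sum_sub_distrib]
        have h2 : ∑ v ∈ (univ : Finset (Fin (d+1))).powerset,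
            (-1:ℤ) ^ (d + 1 + v.card) • φ A0 = 0 := by
          rw [← sum_smul]
          have he : ∑ v ∈ (univ : Finset (Fin (d+1))).powerset, (-1:ℤ) ^ (d + 1 + v.card)
              = (-1:ℤ) ^ (d+1) * ∑ v ∈ (univ : Finset (Fin (d+1))).powerset, (-1:ℤ) ^ v.card := by
            rw [mul_sum]
            exact sum_congr rfl fun v _ => by rw [pow_add]
          rw [he, sum_powerset_neg_one_pow_card_of_nonempty ⟨0, mem_univ 0⟩, mul_zero, zero_smul]
        have h1 : ∑ v ∈ (univ : Finset (Fin (d+1))).powerset,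
            (-1:ℤ) ^ (d + 1 + v.card) • fsDeriv φ A0 ((α.biUnion W) ∪ v.biUnion β'')
              = iterDeriv (fsDeriv φ A0) β'' (α.biUnion W) :=
          (iterDeriv_eq_sum _ _ _).symm
        rw [h1, h2, sub_zero]
        have hconss : (fun i : Fin (d+1) => (Fin.cons A0 β'' : Fin (d+2) → Finset ℕ) i.succ) = β'' := by
          funext i
          exact Fin.cons_succ _ _ _
        have hiter : iterDeriv φ (Fin.cons A0 β'') (α.biUnion W)
            = iterDeriv (fsDeriv φ A0) β'' (α.biUnion W) := by
          have hdef : iterDeriv φ (Fin.cons A0 β'') (α.biUnion W)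
              = iterDeriv (fsDeriv φ ((Fin.cons A0 β'' : Fin (d+2) → Finset ℕ) 0))
                  (fun i => (Fin.cons A0 β'' : Fin (d+2) → Finset ℕ) i.succ) (α.biUnion W) := rfl
          rw [hdef, hconss, Fin.cons_zero]
        rw [← hiter]
        refine hφ.1 (Fin.cons A0 β'') ?_ ?_ (α.biUnion W) ?_ ?_
        · intro i
          induction i using Fin.cases with
          | zero => simpa [Fin.cons_zero] using hA0sub
          | succ i =>
            rw [Fin.cons_succ]
            exact biUnion_subset.mpr fun m _ => hWsub m
        · intro i j hij
          induction i using Fin.cases with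
          | zero =>
            induction j using Fin.cases with
            | zero => exact absurd rfl hij
            | succ j =>
              rw [Fin.cons_zero, Fin.cons_succ]
              exact hA0vW _
          | succ i =>
            induction j using Fin.cases with
            | zero =>
              rw [Fin.cons_zero, Fin.cons_succ]
              exact (hA0vW _).symm
            | succ j =>
              rw [Fin.cons_succ, Fin.cons_succ]
              refine hDW _ _ (hβd i j ?_)
              exact fun h => hij (by rw [h])
        · exact biUnion_subset.mpr fun m _ => hWsub m
        · intro i
          induction i using Fin.cases with
          | zero =>
            rw [Fin.cons_zero]
            exact (hA0vW α).symm
          | succ i =>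
            rw [Fin.cons_succ]
            exact hDW _ _ (hαβ i)
      · rw [hρ]
        simp only [biUnion_empty, union_empty]
        rw [hφ.2]
        abel
    obtain ⟨c, hc1, hc2, hc3⟩ := hk ρ hρPol
    -- assemble b
    refine ⟨fun j => (c j).biUnion W, ?_, ?_, ?_⟩
    · intro j
      constructor
      · obtain ⟨m, hm⟩ := (hc1 j).1
        have hmIcc : m ∈ Finset.Icc 1 k := (hc1 j).2 hm
        rw [Finset.mem_Icc] at hmIcc
        have hmk : m - 1 < k := by omega
        obtain ⟨i, hi⟩ := l.proper ⟨m - 1, hmk⟩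
        refine ⟨fι i, mem_biUnion.mpr ⟨m, hm, ?_⟩⟩
        rw [hW]
        refine mem_image.mpr ⟨i, mem_filter.mpr ⟨mem_univ _, ⟨⟨m-1, hmk⟩, ?_, hi⟩⟩, rfl⟩
        simp only []
        omega
      · exact biUnion_subset.mpr fun m _ => hWsub m
    · intro j j' hjj'
      exact hDW _ _ (hc2 j j' hjj')
    · intro t ht
      have hbU : t.biUnion (fun j => (c j).biUnion W) = (t.biUnion c).biUnion W :=
        (biUnion_biUnion _ _ _).symm
      set v : Finset ℕ := t.biUnion c with hv
      have hvρ : ‖ρ v‖ < ε / 2 := hc3 t ht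
      have hcol : tcol Q hQ (φ (A0 ∪ v.biUnion W)) = tcol Q hQ (φ A0) := by
        rw [hmono v, hcA0]
      have hdist : ‖φ (A0 ∪ v.biUnion W) - φ A0‖ < ε / 2 := by
        have := tcol_dist hQ hcol
        rw [dist_eq_norm] at this
        linarith
      have hval : φ (v.biUnion W) = (φ (A0 ∪ v.biUnion W) - φ A0) - ρ v := by
        simp only [hρ]
        abel
      rw [hbU, hval]
      calc ‖(φ (A0 ∪ v.biUnion W) - φ A0) - ρ v‖
          ≤ ‖φ (A0 ∪ v.biUnion W) - φ A0‖ + ‖ρ v‖ := norm_sub_le _ _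
        _ < ε / 2 + ε / 2 := by linarith
        _ = ε := by ring

end five

/-- Proposition: for any d, s ∈ ℕ and ε > 0 there is r such that every
`φ ∈ Pol⁰_d([r], 𝕋)` has a disjoint s-subcollection `B` in `[r]` such that the
t-producing function `Φ̃_B` of `φ↓_B` has all its values (on nonempty subsets of
`B` of cardinality ≤ d) ε-close to 0. -/
theorem pol0_torus_subpolynomial_small_tproducing (d s : ℕ) (ε : ℝ) (hε : 0 < ε) :
    ∃ r : ℕ, ∀ φ : Finset ℕ → UnitAddCircle,
      Pol0 (Finset.Icc 1 r) d φ →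
      ∃ b : Fin s → Finset ℕ,
        (∀ j, (b j).Nonempty ∧ b j ⊆ Finset.Icc 1 r) ∧
        (∀ j j', j ≠ j' → Disjoint (b j) (b j')) ∧
        ∃ Φtil : Finset (Fin s) → UnitAddCircle,
          (∀ γ : Finset (Fin s),
            φ (γ.biUnion b) =
              ∑ u ∈ γ.powerset.filter (fun u => u ≠ ∅ ∧ u.card ≤ d), Φtil u) ∧
          (∀ u : Finset (Fin s), u ≠ ∅ → u.card ≤ d → dist (Φtil u) 0 < ε) := by
  have hε0 : 0 < ε / 2 ^ d := by positivity
  obtain ⟨r, hr⟩ := small_values d s (ε / 2 ^ d) hε0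
  refine ⟨r, fun φ hφ => ?_⟩
  obtain ⟨b, hb1, hb2, hb3⟩ := hr φ hφ
  refine ⟨b, hb1, hb2, ?_⟩
  refine ⟨fun u => ∑ v ∈ u.powerset, (-1 : ℤ) ^ (u.card + v.card) • φ (v.biUnion b), ?_, ?_⟩
  · intro γ
    have hmob := sum_moebius_eq (fun v => φ (v.biUnion b)) γ
    have hzero : ∀ u ∈ γ.powerset.filter (fun u => ¬(u ≠ ∅ ∧ u.card ≤ d)),
        (∑ v ∈ u.powerset, (-1 : ℤ) ^ (u.card + v.card) • φ (v.biUnion b)) = 0 := by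
      intro u hu
      rw [mem_filter] at hu
      obtain ⟨hu1, hu2⟩ := hu
      by_cases hue : u = ∅
      · subst hue
        simp [hφ.2]
      · have hcard : d + 1 ≤ u.card := by
          push_neg at hu2
          have := hu2 (nonempty_iff_ne_empty.mpr hue)
          omega
        obtain ⟨w, hw, hwcard⟩ := exists_subset_card_eq hcard
        rw [sum_powerset_decomp u w hw]
        refine sum_eq_zero fun t htmem => ?_
        rw [mem_powerset] at htmem
        have hdisj_tw : Disjoint t w := sdiff_disjoint.mono_left htmem
        have hterm : ∀ v' ∈ w.powerset,
            (-1:ℤ) ^ (u.card + (t ∪ v').card) • φ ((t ∪ v').biUnion b)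
              = (-1:ℤ) ^ (u.card + t.card) •
                  ((-1:ℤ) ^ v'.card • φ ((t.biUnion b) ∪ v'.biUnion b)) := by
          intro v' hv'
          rw [mem_powerset] at hv'
          have hdtv : Disjoint t v' := hdisj_tw.mono_right hv'
          rw [card_union_of_disjoint hdtv, biUnion_union'_s8, smul_smul, ← pow_add]
          congr 2
          omega
        rw [sum_congr rfl hterm, ← smul_sum]
        have hv0 : ∑ v' ∈ w.powerset, (-1:ℤ) ^ v'.card • φ ((t.biUnion b) ∪ v'.biUnion b) = 0 := by
          refine alt_vanish hφ.1 b w hwcard (fun j _ => (hb1 j).2) hb2 (t.biUnion b) ?_ ?_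
          · exact biUnion_subset.mpr fun j _ => (hb1 j).2
          · intro j hj
            refine (disjoint_biUnion_left _ _ _).mpr fun j' hj' => ?_
            exact hb2 j' j (fun h => (disjoint_left.mp hdisj_tw) hj' (h ▸ hj))
        rw [hv0, smul_zero]
    calc φ (γ.biUnion b)
        = ∑ u ∈ γ.powerset, ∑ v ∈ u.powerset, (-1 : ℤ) ^ (u.card + v.card) • φ (v.biUnion b) :=
          hmob.symm
      _ = ∑ u ∈ γ.powerset.filter (fun u => u ≠ ∅ ∧ u.card ≤ d),
            (∑ v ∈ u.powerset, (-1 : ℤ) ^ (u.card + v.card) • φ (v.biUnion b))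
          + ∑ u ∈ γ.powerset.filter (fun u => ¬(u ≠ ∅ ∧ u.card ≤ d)),
            (∑ v ∈ u.powerset, (-1 : ℤ) ^ (u.card + v.card) • φ (v.biUnion b)) :=
          (sum_filter_add_sum_filter_not _ _ _).symm
      _ = ∑ u ∈ γ.powerset.filter (fun u => u ≠ ∅ ∧ u.card ≤ d),
            (∑ v ∈ u.powerset, (-1 : ℤ) ^ (u.card + v.card) • φ (v.biUnion b)) := by
          rw [sum_eq_zero hzero, add_zero]
  · intro u hune hucard
    rw [dist_eq_norm, sub_zero]
    have hbound : ∀ v ∈ u.powerset,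
        ‖(-1:ℤ) ^ (u.card + v.card) • φ (v.biUnion b)‖ < ε / 2 ^ d := by
      intro v _
      have hnorm : ‖(-1:ℤ) ^ (u.card + v.card) • φ (v.biUnion b)‖ = ‖φ (v.biUnion b)‖ := by
        rcases neg_one_pow_eq_or ℤ (u.card + v.card) with h | h <;> rw [h]
        · rw [one_zsmul]
        · rw [neg_one_zsmul, norm_neg]
      rw [hnorm]
      rcases v.eq_empty_or_nonempty with rfl | hvne
      · simpa [hφ.2] using hε0
      · exact hb3 v hvne
    calc ‖∑ v ∈ u.powerset, (-1:ℤ) ^ (u.card + v.card) • φ (v.biUnion b)‖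
        ≤ ∑ v ∈ u.powerset, ‖(-1:ℤ) ^ (u.card + v.card) • φ (v.biUnion b)‖ := norm_sum_le _ _
      _ < ∑ _v ∈ u.powerset, (ε / 2 ^ d) :=
          sum_lt_sum_of_nonempty ⟨∅, mem_powerset.mpr (empty_subset u)⟩ hbound
      _ = (2:ℝ) ^ u.card * (ε / 2 ^ d) := by
          rw [sum_const, card_powerset, nsmul_eq_mul]
          push_cast
          ring
      _ ≤ (2:ℝ) ^ d * (ε / 2 ^ d) := by
          have h2 : (2:ℝ) ^ u.card ≤ 2 ^ d := pow_le_pow_right₀ one_le_two hucard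
          exact mul_le_mul_of_nonneg_right h2 (le_of_lt hε0)
      _ = ε := by field_simp
end
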